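/- arXiv:2010.03727 — 2 statements merged into one kernel-verified Lean document; each statement's English description precedes it below -/
import Mathlib

section
/- For every real z with 0 ≤ z < 1, z · ∑_{n=0}^∞ (1/2)ₙ (n!)³/((2)ₙ)³ · zⁿ/n! = −4·Li₂(1/2 − √(1−z)/2) − 8√(1−z) + 2 log²(√(1−z)+1) − 4 log 2 · log(√(1−z)+1) + 8 log(√(1−z)+1) + 8 + 2 log²2 − 8 log 2. -/
noncomputable def poch (a : ℝ) (n : ℕ) : ℝ := ∏ i ∈ Finset.range n, (a + i)

/-- Dilogarithm `Li₂(x) = ∑_{k ≥ 1} x^k / k²`. -/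
noncomputable def Li2 (x : ℝ) : ℝ := ∑' k : ℕ, x ^ (k + 1) / ((k : ℝ) + 1)^2

open Real

lemma summable_bound' {K q : ℝ} (hq0 : 0 ≤ q) (hq : q < 1) :
    Summable (fun n : ℕ => K * (((n : ℝ) + 1) * q ^ n)) := by
  have h1 : Summable (fun n : ℕ => ((n : ℝ)) ^ 1 * q ^ n) :=
    summable_pow_mul_geometric_of_norm_lt_one 1
      (by rwa [Real.norm_eq_abs, abs_of_nonneg hq0])
  have h2 : Summable (fun n : ℕ => q ^ n) := summable_geometric_of_lt_one hq0 hq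
  refine ((h1.add h2).mul_left K).congr fun n => by push_cast; ring

/-- summability of coefficient series with geometric growth -/
lemma summable_coeff {d : ℕ → ℝ} {K : ℝ} (hd : ∀ n, |d n| ≤ K * (((n:ℝ)+1) * 4 ^ n))
    {x : ℝ} (hx : |x| < 1/4) : Summable fun n => d n * x ^ n := by
  apply Summable.of_norm
  refine Summable.of_nonneg_of_le (fun n => norm_nonneg _) (fun n => ?_)
    (summable_bound' (K := K) (q := 4 * |x|) (by positivity) (by linarith))
  rw [Real.norm_eq_abs, abs_mul, abs_pow]
  calc |d n| * |x| ^ n ≤ (K * (((n:ℝ)+1) * 4 ^ n)) * |x| ^ n := by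
        apply mul_le_mul_of_nonneg_right (hd n) (by positivity)
    _ = K * (((n:ℝ)+1) * (4 * |x|) ^ n) := by rw [mul_pow]; ring

lemma const_of_hasDerivAt_eq {s : Set ℝ} (hso : IsOpen s) (hsc : Convex ℝ s)
    {f : ℝ → ℝ} (hf : ∀ t ∈ s, HasDerivAt f 0 t)
    {x y : ℝ} (hx : x ∈ s) (hy : y ∈ s) : f x = f y := by
  refine hsc.is_const_of_fderivWithin_eq_zero (𝕜 := ℝ)
    (fun t ht => ((hf t ht).differentiableAt).differentiableWithinAt) (fun t ht => ?_) hx hy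
  rw [fderivWithin_of_isOpen hso ht]
  have := (hf t ht).hasFDerivAt.fderiv
  rw [this]
  ext v
  simp

/-- The key abs bound on `t*(1-t)` over the interval. -/
lemma absx_le {c t : ℝ} (hc0 : 0 < c) (hc : c < 1/2) (ht1 : -(1/100) < t) (ht2 : t < c) :
    |t * (1 - t)| ≤ max (c * (1 - c)) (1/50) := by
  rcases le_or_gt 0 t with h | h
  · rw [abs_of_nonneg (by nlinarith)]
    exact le_max_of_le_left (by nlinarith)
  · rw [abs_of_neg (by nlinarith)]
    exact le_max_of_le_right (by nlinarith)

lemma rmax_lt {c : ℝ} (hc0 : 0 < c) (hc : c < 1/2) : 4 * max (c * (1 - c)) (1/50) < 1 := by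
  rcases max_cases (c * (1 - c)) (1/50) with ⟨h, _⟩ | ⟨h, _⟩ <;> rw [h] <;> nlinarith

/-- Term-by-term differentiation of `∑ d n (t(1-t))^(n+1)`. -/
lemma hasDerivAt_xseries {d : ℕ → ℝ} {K : ℝ} (hd : ∀ n, |d n| ≤ K * 4 ^ n)
    {c t₀ : ℝ} (hc0 : 0 < c) (hc : c < 1/2) (ht1 : -(1/100) < t₀) (ht2 : t₀ < c) :
    HasDerivAt (fun t => ∑' n : ℕ, d n * (t * (1 - t)) ^ (n + 1))
      (∑' n : ℕ, d n * (((n : ℝ) + 1) * (t₀ * (1 - t₀)) ^ n * (1 - 2 * t₀))) t₀ := by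
  have hK : 0 ≤ K := by
    have := (abs_nonneg (d 0)).trans (hd 0); simpa using this
  set r : ℝ := max (c * (1 - c)) (1/50) with hr
  have hr0 : 0 < r := lt_of_lt_of_le (by norm_num) (le_max_right _ _)
  have hr4 : 4 * r < 1 := rmax_lt hc0 hc
  refine hasDerivAt_tsum_of_isPreconnected (𝕜 := ℝ) (F := ℝ)
    (g := fun n t => d n * (t * (1 - t)) ^ (n + 1))
    (g' := fun n y => d n * (((n : ℝ) + 1) * (y * (1 - y)) ^ n * (1 - 2 * y)))
    (u := fun n : ℕ => (2 * K) * (((n : ℝ) + 1) * (4 * r) ^ n))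
    (summable_bound' (by positivity) hr4) (isOpen_Ioo (a := -(1/100)) (b := c))
    isPreconnected_Ioo (fun n y hy => ?_) (fun n y hy => ?_)
    (show (0:ℝ) ∈ Set.Ioo _ _ from ⟨by norm_num, hc0⟩) ?_ ⟨ht1, ht2⟩
  · -- pointwise derivative
    have base : HasDerivAt (fun t : ℝ => t * (1 - t)) (1 - 2 * y) y := by
      have := (hasDerivAt_id y).mul ((hasDerivAt_const y (1:ℝ)).sub (hasDerivAt_id y))
      simp only [id] at this
      exact this.congr_deriv (by simp only [Pi.sub_apply, id]; ring)
    have := (base.pow (n + 1)).const_mul (d n)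
    exact this.congr_deriv (by simp)
  · -- bound
    obtain ⟨hy1, hy2⟩ := hy
    have hxr : |y * (1 - y)| ≤ r := absx_le hc0 hc hy1 hy2
    have h12 : |1 - 2 * y| ≤ 2 := by rw [abs_le]; constructor <;> nlinarith
    rw [Real.norm_eq_abs, abs_mul, abs_mul, abs_mul, abs_pow]
    have hn : |((n:ℝ) + 1)| = (n:ℝ) + 1 := abs_of_nonneg (by positivity)
    rw [hn]
    calc |d n| * (((n:ℝ) + 1) * |y * (1 - y)| ^ n * |1 - 2 * y|)
        ≤ (K * 4 ^ n) * (((n:ℝ) + 1) * r ^ n * 2) := by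
          gcongr
          all_goals first | exact hd n | exact abs_nonneg _ | positivity
      _ = (2 * K) * (((n : ℝ) + 1) * (4 * r) ^ n) := by rw [mul_pow]; ring
  · -- summable at 0
    refine summable_zero.congr fun n => ?_
    norm_num

noncomputable def cb (n : ℕ) : ℝ := Nat.centralBinom n

lemma cb_nonneg (n : ℕ) : 0 ≤ cb n := Nat.cast_nonneg _

lemma cb_zero : cb 0 = 1 := by norm_num [cb, Nat.centralBinom]

lemma cb_one : cb 1 = 2 := by norm_num [cb, Nat.centralBinom, Nat.choose]

lemma cb_rec (n : ℕ) : ((n:ℝ) + 1) * cb (n+1) = (4*n + 2) * cb n := by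
  have := Nat.succ_mul_centralBinom_succ n
  have h : ((n + 1) * (n + 1).centralBinom : ℝ) = (2 * (2 * n + 1) * n.centralBinom : ℕ) := by
    exact_mod_cast congrArg (Nat.cast : ℕ → ℝ) this
  push_cast at h
  unfold cb; push_cast; linarith

lemma cb_le (n : ℕ) : cb n ≤ 4 ^ n := by
  induction n with
  | zero => simp [cb_zero]
  | succ n ih =>
    have h := cb_rec n
    have h0 := cb_nonneg n
    have h1 : (0:ℝ) < (n:ℝ) + 1 := by positivity
    have : cb (n+1) = ((4*n+2) * cb n) / ((n:ℝ)+1) := by field_simp at h ⊢; linarith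
    rw [this]
    rw [div_le_iff₀ h1, pow_succ]
    have hp : (0:ℝ) ≤ 4^n := by positivity
    nlinarith

lemma summable_coeff' {d : ℕ → ℝ} {K : ℝ} (hd : ∀ n, |d n| ≤ K * (((n:ℝ)+1) * 4 ^ n))
    {x : ℝ} (hx : |x| < 1/4) : Summable fun n => d n * x ^ (n+1) := by
  have hK : 0 ≤ K := by have := (abs_nonneg (d 0)).trans (hd 0); simpa using this
  have h : ∀ n, |d n * x| ≤ K * (((n:ℝ)+1) * 4 ^ n) := by
    intro n
    rw [abs_mul]
    calc |d n| * |x| ≤ (K * (((n:ℝ)+1) * 4 ^ n)) * 1 := by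
          apply mul_le_mul (hd n) (by linarith) (abs_nonneg _)
          positivity
      _ = K * (((n:ℝ)+1) * 4 ^ n) := by ring
  refine (summable_coeff h hx).congr fun n => ?_
  rw [pow_succ]; ring

/-- |x| < 1/4 on the interval -/
lemma absx_lt {c t : ℝ} (hc0 : 0 < c) (hc : c < 1/2) (ht1 : -(1/100) < t) (ht2 : t < c) :
    |t * (1 - t)| < 1/4 :=
  lt_of_le_of_lt (absx_le hc0 hc ht1 ht2) (by linarith [rmax_lt hc0 hc])


lemma bd2'' : ∀ n : ℕ, |cb (n+1)| ≤ 4 * 4 ^ n := by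
  intro n
  rw [abs_of_nonneg (cb_nonneg _)]
  calc cb (n+1) ≤ 4 ^ (n+1) := cb_le _
    _ = 4 * 4 ^ n := by rw [pow_succ]; ring

-- coefficient bounds
lemma bd1 (k : ℕ) : ∀ n : ℕ, |cb n / ((n:ℝ)+1)^k| ≤ 1 * (((n:ℝ)+1) * 4 ^ n) := by
  intro n
  have h1 : (1:ℝ) ≤ ((n:ℝ)+1)^k := one_le_pow₀ (by linarith [Nat.cast_nonneg (α := ℝ) n])
  rw [abs_div, abs_of_nonneg (cb_nonneg n), abs_of_nonneg (by positivity)]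
  calc cb n / ((n:ℝ)+1)^k ≤ cb n / 1 := by
        apply div_le_div_of_nonneg_left (cb_nonneg n) (by norm_num) h1
    _ = cb n := by ring
    _ ≤ 4 ^ n := cb_le n
    _ ≤ ((n:ℝ)+1) * 4 ^ n := by
        nlinarith [pow_nonneg (by norm_num : (0:ℝ) ≤ 4) n, Nat.cast_nonneg (α := ℝ) n]
    _ = 1 * (((n:ℝ)+1) * 4 ^ n) := by ring

lemma bd2 : ∀ n : ℕ, |cb (n+1)| ≤ 4 * (((n:ℝ)+1) * 4 ^ n) := by
  intro n
  rw [abs_of_nonneg (cb_nonneg _)]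
  calc cb (n+1) ≤ 4 ^ (n+1) := cb_le _
    _ = 4 * 4 ^ n := by rw [pow_succ]; ring
    _ ≤ 4 * (((n:ℝ)+1) * 4 ^ n) := by
        nlinarith [pow_nonneg (by norm_num : (0:ℝ) ≤ 4) n, Nat.cast_nonneg (α := ℝ) n]

lemma bd3 : ∀ n : ℕ, |cb (n+1) * (((n:ℝ))+1)| ≤ 4 * (((n:ℝ)+1) * 4 ^ n) := by
  intro n
  rw [abs_mul, abs_of_nonneg (cb_nonneg _), abs_of_nonneg (by positivity : (0:ℝ) ≤ (n:ℝ)+1)]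
  have h := cb_le (n+1)
  have h4 : (4:ℝ)^(n+1) = 4 * 4^n := by rw [pow_succ]; ring
  nlinarith [pow_nonneg (by norm_num : (0:ℝ) ≤ 4) n, Nat.cast_nonneg (α := ℝ) n, cb_nonneg (n+1)]

/-- claim0: `(1-2t) * (1 + ∑ cb(n+1) x^(n+1)) = 1` on the interval. -/
lemma claim0 {c t : ℝ} (hc0 : 0 < c) (hc : c < 1/2) (ht1 : -(1/100) < t) (ht2 : t < c) :
    (1 - 2*t) * (1 + ∑' n : ℕ, cb (n+1) * (t*(1-t))^(n+1)) = 1 := by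
  have key : ∀ y ∈ Set.Ioo (-(1/100):ℝ) c,
      HasDerivAt (fun t => (1 - 2*t) * (1 + ∑' n : ℕ, cb (n+1) * (t*(1-t))^(n+1))) 0 y := by
    rintro y ⟨hy1, hy2⟩
    have hx : |y * (1-y)| < 1/4 := absx_lt hc0 hc hy1 hy2
    have S2 : Summable fun n : ℕ => cb (n+1) * (y*(1-y))^(n+1) := summable_coeff' bd2 hx
    have S3 : Summable fun n : ℕ => cb (n+1) * (((n:ℝ))+1) * (y*(1-y))^n :=
      summable_coeff bd3 hx
    have hH := hasDerivAt_xseries (d := fun n => cb (n+1)) (K := 4) bd2'' hc0 hc hy1 hy2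
    have hlin : HasDerivAt (fun t : ℝ => 1 - 2*t) (-2) y := by
      have h := ((hasDerivAt_const y (1:ℝ)).sub ((hasDerivAt_id y).const_mul 2))
      simp only [id] at h
      exact h.congr_deriv (by norm_num)
    have hmul := hlin.mul ((hasDerivAt_const y (1:ℝ)).add hH)
    refine hmul.congr_deriv ?_
    simp only [Pi.add_apply]
    set H : ℝ := ∑' n : ℕ, cb (n+1) * (y*(1-y))^(n+1) with hHdef
    set A : ℝ := ∑' n : ℕ, cb (n+1) * (((n:ℝ))+1) * (y*(1-y))^n with hAdef
    have hA' : ∑' n : ℕ, cb (n+1) * ((((n:ℝ))+1) * (y*(1-y))^n * (1 - 2*y)) = (1-2*y) * A := by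
      rw [hAdef, ← tsum_mul_left]
      exact tsum_congr fun n => by ring
    have hterm : ∀ n : ℕ, cb (n+1+1) * ((((n+1:ℕ)):ℝ)+1) * (y*(1-y))^(n+1)
        = 4*(y*(1-y))*(cb (n+1) * (((n:ℝ))+1)*(y*(1-y))^n) + 2*(cb (n+1)*(y*(1-y))^(n+1)) := by
      intro n
      have hr := cb_rec (n+1)
      push_cast at hr ⊢
      linear_combination (y*(1-y))^(n+1) * hr
    have keyA : A = 2 + (4*(y*(1-y))*A + 2*H) := by
      calc A = cb (0+1) * (((0:ℕ):ℝ)+1) * (y*(1-y))^0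
            + ∑' n : ℕ, cb (n+1+1) * ((((n+1:ℕ)):ℝ)+1) * (y*(1-y))^(n+1) := Summable.tsum_eq_zero_add S3
        _ = 2 + ∑' n : ℕ, (4*(y*(1-y))*(cb (n+1) * (((n:ℝ))+1)*(y*(1-y))^n)
              + 2*(cb (n+1)*(y*(1-y))^(n+1))) := by
            rw [tsum_congr hterm]
            norm_num [cb_one]
        _ = 2 + (4*(y*(1-y))*A + 2*H) := by
            rw [Summable.tsum_add (S3.mul_left (4*(y*(1-y)))) (S2.mul_left 2),
              tsum_mul_left, tsum_mul_left]
    beta_reduce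
    rw [hA']
    linear_combination keyA
  have := const_of_hasDerivAt_eq isOpen_Ioo (convex_Ioo _ _) key
    (Set.mem_Ioo.mpr ⟨ht1, ht2⟩) (Set.mem_Ioo.mpr ⟨by norm_num, hc0⟩)
  rw [this]
  norm_num

lemma bd_div {q : ℝ} (hq : 1 ≤ q) (n : ℕ) : |cb n / q| ≤ 1 * 4 ^ n := by
  rw [abs_div, abs_of_nonneg (cb_nonneg n), abs_of_nonneg (by linarith)]
  calc cb n / q ≤ cb n / 1 := div_le_div_of_nonneg_left (cb_nonneg n) (by norm_num) hq
    _ = cb n := div_one _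
    _ ≤ 4 ^ n := cb_le n
    _ = 1 * 4 ^ n := (one_mul _).symm

lemma one_le_cast_add_one (n : ℕ) : (1:ℝ) ≤ (n:ℝ) + 1 := by
  linarith [Nat.cast_nonneg (α := ℝ) n]

lemma bd0 : ∀ n : ℕ, |cb n| ≤ 1 * (((n:ℝ)+1) * 4 ^ n) := by
  intro n
  have := bd1 0 n
  simpa using this

lemma claim1 {c t : ℝ} (hc0 : 0 < c) (hc : c < 1/2) (ht1 : -(1/100) < t) (ht2 : t < c) :
    ∑' n : ℕ, cb n / ((n:ℝ)+1) * (t*(1-t))^(n+1) = t := by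
  have key : ∀ y ∈ Set.Ioo (-(1/100):ℝ) c,
      HasDerivAt (fun t => (∑' n : ℕ, cb n / ((n:ℝ)+1) * (t*(1-t))^(n+1)) - t) 0 y := by
    rintro y ⟨hy1, hy2⟩
    have hx : |y * (1-y)| < 1/4 := absx_lt hc0 hc hy1 hy2
    have S0 : Summable fun n : ℕ => cb n * (y*(1-y))^n := summable_coeff bd0 hx
    have hF := hasDerivAt_xseries (d := fun n => cb n / ((n:ℝ)+1)) (K := 1)
      (fun n => bd_div (one_le_cast_add_one n) n) hc0 hc hy1 hy2
    have hval : (∑' n : ℕ, cb n / ((n:ℝ)+1) * (((n:ℝ)+1) * (y*(1-y))^n * (1 - 2*y))) = 1 := by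
      have h1 : (∑' n : ℕ, cb n / ((n:ℝ)+1) * (((n:ℝ)+1) * (y*(1-y))^n * (1 - 2*y)))
          = (1-2*y) * ∑' n : ℕ, cb n * (y*(1-y))^n := by
        rw [← tsum_mul_left]
        refine tsum_congr fun n => ?_
        have h : ((n:ℝ)+1) ≠ 0 := by positivity
        field_simp
      rw [h1, Summable.tsum_eq_zero_add S0]
      have h2 : cb 0 * (y*(1-y))^0 = 1 := by norm_num [cb_zero]
      rw [h2]
      exact claim0 hc0 hc hy1 hy2
    have hF' := hF.sub (hasDerivAt_id y)
    rw [hval] at hF'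
    exact hF'.congr_deriv (by norm_num)
  have h0 := const_of_hasDerivAt_eq isOpen_Ioo (convex_Ioo _ _) key
    (Set.mem_Ioo.mpr ⟨ht1, ht2⟩) (Set.mem_Ioo.mpr ⟨by norm_num, hc0⟩)
  have hz : (∑' n : ℕ, cb n / ((n:ℝ)+1) * ((0:ℝ)*(1-0))^(n+1)) - 0 = 0 := by
    simp
  rw [hz] at h0
  linarith [h0]

lemma claimP1 {c t : ℝ} (hc0 : 0 < c) (hc : c < 1/2) (ht1 : -(1/100) < t) (ht2 : t < c) :
    ∑' n : ℕ, cb n / ((n:ℝ)+1) * (t*(1-t))^n = 1/(1-t) := by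
  rcases eq_or_ne t 0 with rfl | htne
  · rw [tsum_eq_single 0 (fun n hn => by norm_num [zero_pow hn])]
    norm_num [cb_zero]
  · have h1t : (1:ℝ) - t ≠ 0 := by intro h; nlinarith
    have h2 : (t*(1-t)) * (∑' n : ℕ, cb n / ((n:ℝ)+1) * (t*(1-t))^n) = t := by
      have ha : (t*(1-t)) * (∑' n : ℕ, cb n / ((n:ℝ)+1) * (t*(1-t))^n)
          = ∑' n : ℕ, cb n / ((n:ℝ)+1) * (t*(1-t))^(n+1) := by
        rw [← tsum_mul_left]
        exact tsum_congr fun n => by rw [pow_succ]; ring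
      rw [ha]
      exact claim1 hc0 hc ht1 ht2
    rw [eq_div_iff h1t]
    apply mul_left_cancel₀ htne
    linear_combination h2

lemma claim2 {c t : ℝ} (hc0 : 0 < c) (hc : c < 1/2) (ht1 : -(1/100) < t) (ht2 : t < c) :
    ∑' n : ℕ, cb n / ((n:ℝ)+1)^2 * (t*(1-t))^(n+1) = Real.log (1-t) + 2*t := by
  have key : ∀ y ∈ Set.Ioo (-(1/100):ℝ) c,
      HasDerivAt (fun t => (∑' n : ℕ, cb n / ((n:ℝ)+1)^2 * (t*(1-t))^(n+1))
        - (Real.log (1-t) + 2*t)) 0 y := by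
    rintro y ⟨hy1, hy2⟩
    have h1y : (1:ℝ) - y ≠ 0 := by intro h; nlinarith
    have hF := hasDerivAt_xseries (d := fun n => cb n / ((n:ℝ)+1)^2) (K := 1)
      (fun n => bd_div (one_le_pow₀ (one_le_cast_add_one n)) n) hc0 hc hy1 hy2
    have hval : (∑' n : ℕ, cb n / ((n:ℝ)+1)^2 * (((n:ℝ)+1) * (y*(1-y))^n * (1 - 2*y)))
        = (1-2*y) * (1/(1-y)) := by
      have h1 : (∑' n : ℕ, cb n / ((n:ℝ)+1)^2 * (((n:ℝ)+1) * (y*(1-y))^n * (1 - 2*y)))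
          = (1-2*y) * ∑' n : ℕ, cb n / ((n:ℝ)+1) * (y*(1-y))^n := by
        rw [← tsum_mul_left]
        refine tsum_congr fun n => ?_
        have h : ((n:ℝ)+1) ≠ 0 := by positivity
        field_simp
      rw [h1, claimP1 hc0 hc hy1 hy2]
    have hlog : HasDerivAt (fun t : ℝ => Real.log (1-t)) (-(1/(1-y))) y := by
      have h := (Real.hasDerivAt_log h1y).comp y
        ((hasDerivAt_const y (1:ℝ)).sub (hasDerivAt_id y))
      exact h.congr_deriv (by ring)
    have hR : HasDerivAt (fun t : ℝ => Real.log (1-t) + 2*t) (-(1/(1-y)) + 2) y := by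
      have h2 : HasDerivAt (fun t : ℝ => 2*t) 2 y := by
        simpa using (hasDerivAt_id y).const_mul (2:ℝ)
      exact hlog.add h2
    have hF' := hF.sub hR
    rw [hval] at hF'
    refine hF'.congr_deriv ?_
    field_simp
    ring
  have h0 := const_of_hasDerivAt_eq isOpen_Ioo (convex_Ioo _ _) key
    (Set.mem_Ioo.mpr ⟨ht1, ht2⟩) (Set.mem_Ioo.mpr ⟨by norm_num, hc0⟩)
  have hz : (∑' n : ℕ, cb n / ((n:ℝ)+1)^2 * ((0:ℝ)*(1-0))^(n+1))
      - (Real.log (1-0) + 2*0) = 0 := by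
    simp
  rw [hz] at h0
  linarith [h0]

lemma claimP2 {c t : ℝ} (hc0 : 0 < c) (hc : c < 1/2) (ht1 : -(1/100) < t) (ht2 : t < c)
    (htne : t ≠ 0) :
    ∑' n : ℕ, cb n / ((n:ℝ)+1)^2 * (t*(1-t))^n = (Real.log (1-t) + 2*t)/(t*(1-t)) := by
  have h1t : (1:ℝ) - t ≠ 0 := by intro h; nlinarith
  have hxne : t*(1-t) ≠ 0 := mul_ne_zero htne h1t
  have h2 : (t*(1-t)) * (∑' n : ℕ, cb n / ((n:ℝ)+1)^2 * (t*(1-t))^n)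
      = Real.log (1-t) + 2*t := by
    have ha : (t*(1-t)) * (∑' n : ℕ, cb n / ((n:ℝ)+1)^2 * (t*(1-t))^n)
        = ∑' n : ℕ, cb n / ((n:ℝ)+1)^2 * (t*(1-t))^(n+1) := by
      rw [← tsum_mul_left]
      exact tsum_congr fun n => by rw [pow_succ]; ring
    rw [ha]
    exact claim2 hc0 hc ht1 ht2
  rw [eq_div_iff hxne]
  linear_combination h2

lemma hasDerivAt_li2 {y : ℝ} (hy : |y| < 3/4) :
    HasDerivAt (fun x : ℝ => ∑' k : ℕ, x^(k+1)/((k:ℝ)+1)^2) (∑' k : ℕ, y^k/((k:ℝ)+1)) y := by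
  have hy1 : -(3/4:ℝ) < y := by cases abs_lt.mp hy; linarith
  have hy2 : y < 3/4 := by cases abs_lt.mp hy; linarith
  refine hasDerivAt_tsum_of_isPreconnected (𝕜 := ℝ) (F := ℝ)
    (g := fun k x => x^(k+1)/((k:ℝ)+1)^2) (g' := fun k x => x^k/((k:ℝ)+1))
    (u := fun k : ℕ => (3/4:ℝ)^k)
    (summable_geometric_of_lt_one (by norm_num) (by norm_num))
    (isOpen_Ioo (a := -(3/4:ℝ)) (b := (3/4:ℝ))) isPreconnected_Ioo
    (fun k x hx => ?_) (fun k x hx => ?_)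
    (show (0:ℝ) ∈ Set.Ioo _ _ from by constructor <;> norm_num) ?_ ⟨hy1, hy2⟩
  · have h := (hasDerivAt_pow (k+1) x).div_const (((k:ℝ)+1)^2)
    refine h.congr_deriv ?_
    have hk : ((k:ℝ)+1) ≠ 0 := by positivity
    push_cast
    field_simp
  · obtain ⟨ha, hb⟩ := hx
    have habs : |x| ≤ 3/4 := by rw [abs_le]; constructor <;> linarith
    rw [Real.norm_eq_abs, abs_div, abs_pow, abs_of_nonneg (by positivity : (0:ℝ) ≤ (k:ℝ)+1)]
    calc |x|^k / ((k:ℝ)+1) ≤ |x|^k / 1 := by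
          apply div_le_div_of_nonneg_left (by positivity) (by norm_num) (one_le_cast_add_one k)
      _ = |x|^k := div_one _
      _ ≤ (3/4:ℝ)^k := pow_le_pow_left₀ (abs_nonneg x) habs k
  · refine summable_zero.congr fun k => ?_
    norm_num

lemma Mval {t : ℝ} (h1 : |t| < 1) (ht : t ≠ 0) :
    ∑' k : ℕ, t^k/((k:ℝ)+1) = -Real.log (1-t)/t := by
  have hs := Real.hasSum_pow_div_log_of_abs_lt_one h1
  have h2 : t * ∑' k : ℕ, t^k/((k:ℝ)+1) = -Real.log (1-t) := by
    rw [← tsum_mul_left, ← hs.tsum_eq]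
    exact tsum_congr fun k => by rw [pow_succ]; ring
  rw [eq_div_iff ht]
  linear_combination h2

lemma Mzero : ∑' k : ℕ, (0:ℝ)^k/((k:ℝ)+1) = 1 := by
  rw [tsum_eq_single 0 (fun k hk => by simp [zero_pow hk])]
  norm_num

lemma claim3 {c t : ℝ} (hc0 : 0 < c) (hc : c < 1/2) (ht1 : -(1/100) < t) (ht2 : t < c) :
    ∑' n : ℕ, cb n / ((n:ℝ)+1)^3 * (t*(1-t))^(n+1)
      = -(∑' k : ℕ, t^(k+1)/((k:ℝ)+1)^2) + (1/2)*(Real.log (1-t))^2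
        + 2*Real.log (1-t) + 4*t := by
  have key : ∀ y ∈ Set.Ioo (-(1/100):ℝ) c,
      HasDerivAt (fun t => (∑' n : ℕ, cb n / ((n:ℝ)+1)^3 * (t*(1-t))^(n+1))
        - (-(∑' k : ℕ, t^(k+1)/((k:ℝ)+1)^2) + (1/2)*(Real.log (1-t))^2
          + 2*Real.log (1-t) + 4*t)) 0 y := by
    rintro y ⟨hy1, hy2⟩
    have h1y : (1:ℝ) - y ≠ 0 := by intro h; nlinarith
    -- LHS derivative
    have hF := hasDerivAt_xseries (d := fun n => cb n / ((n:ℝ)+1)^3) (K := 1)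
      (fun n => bd_div (one_le_pow₀ (one_le_cast_add_one n)) n) hc0 hc hy1 hy2
    have hF2 : (∑' n : ℕ, cb n / ((n:ℝ)+1)^3 * (((n:ℝ)+1) * (y*(1-y))^n * (1 - 2*y)))
        = (1-2*y) * ∑' n : ℕ, cb n / ((n:ℝ)+1)^2 * (y*(1-y))^n := by
      rw [← tsum_mul_left]
      refine tsum_congr fun n => ?_
      have h : ((n:ℝ)+1) ≠ 0 := by positivity
      field_simp
    rw [hF2] at hF
    -- RHS derivative
    have hLi := hasDerivAt_li2 (y := y) (by rw [abs_lt]; constructor <;> linarith)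
    have hlog : HasDerivAt (fun t : ℝ => Real.log (1-t)) (-(1/(1-y))) y := by
      have h := (Real.hasDerivAt_log h1y).comp y
        ((hasDerivAt_const y (1:ℝ)).sub (hasDerivAt_id y))
      exact h.congr_deriv (by ring)
    have hsq := hlog.pow 2
    have hid4 : HasDerivAt (fun t : ℝ => 4*t) 4 y := by
      simpa using (hasDerivAt_id y).const_mul (4:ℝ)
    have hR := ((hLi.neg.add (hsq.const_mul (1/2:ℝ))).add (hlog.const_mul 2)).add hid4
    have hFR := hF.sub hR
    refine hFR.congr_deriv ?_
    -- show 0 = Dl - Dr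
    have hM1 : (1:ℝ) - y > 0 := by nlinarith
    rcases eq_or_ne y 0 with rfl | hyne
    · have hp2 : ∑' n : ℕ, cb n / ((n:ℝ)+1)^2 * ((0:ℝ)*(1-0))^n = 1 := by
        rw [tsum_eq_single 0 (fun n hn => by norm_num [zero_pow hn])]
        norm_num [cb_zero]
      rw [hp2, Mzero]
      norm_num
    · rw [claimP2 hc0 hc hy1 hy2 hyne,
        Mval (by rw [abs_lt]; constructor <;> linarith) hyne]
      have hxne : y*(1-y) ≠ 0 := mul_ne_zero hyne h1y
      field_simp
      ring
  have h0 := const_of_hasDerivAt_eq isOpen_Ioo (convex_Ioo _ _) key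
    (Set.mem_Ioo.mpr ⟨ht1, ht2⟩) (Set.mem_Ioo.mpr ⟨by norm_num, hc0⟩)
  have hz : (∑' n : ℕ, cb n / ((n:ℝ)+1)^3 * ((0:ℝ)*(1-0))^(n+1))
      - (-(∑' k : ℕ, (0:ℝ)^(k+1)/((k:ℝ)+1)^2) + (1/2)*(Real.log (1-0))^2
        + 2*Real.log (1-0) + 4*0) = 0 := by
    simp
  rw [hz] at h0
  linarith [h0]

lemma poch_succ (a : ℝ) (n : ℕ) : poch a (n+1) = poch a n * (a + n) := by
  unfold poch
  rw [Finset.prod_range_succ]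

lemma poch_two (n : ℕ) : poch 2 n = (Nat.factorial (n+1) : ℝ) := by
  induction n with
  | zero => simp [poch]
  | succ n ih =>
    rw [poch_succ, ih, Nat.factorial_succ (n+1)]
    push_cast
    ring

lemma poch_half (n : ℕ) :
    (4:ℝ)^n * (Nat.factorial n : ℝ) * poch (1/2) n = (Nat.factorial (2*n) : ℝ) := by
  induction n with
  | zero => simp [poch]
  | succ n ih =>
    have hfs : (Nat.factorial (n+1) : ℝ) = ((n:ℝ)+1) * (Nat.factorial n : ℝ) := by
      rw [Nat.factorial_succ]; push_cast; ring
    have h2 : (Nat.factorial (2*(n+1)) : ℝ)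
        = (2*(n:ℝ)+2)*((2*(n:ℝ)+1)*(Nat.factorial (2*n) : ℝ)) := by
      have he : 2*(n+1) = (2*n+1)+1 := by ring
      rw [he, Nat.factorial_succ, Nat.factorial_succ]
      push_cast
      ring
    rw [poch_succ, hfs, h2, pow_succ]
    linear_combination (4*((n:ℝ)+1)*(1/2+(n:ℝ))) * ih

lemma cb_fact (n : ℕ) :
    cb n * ((Nat.factorial n : ℝ) * (Nat.factorial n : ℝ)) = (Nat.factorial (2*n) : ℝ) := by
  have h := Nat.choose_mul_factorial_mul_factorial (show n ≤ 2*n by omega)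
  have he : (2*n - n) = n := by omega
  rw [he] at h
  have h' : (((2*n).choose n : ℝ)) * (Nat.factorial n : ℝ) * (Nat.factorial n : ℝ)
      = (Nat.factorial (2*n) : ℝ) := by exact_mod_cast congrArg (Nat.cast : ℕ → ℝ) h
  unfold cb Nat.centralBinom
  linear_combination h'

lemma term_eq {z t : ℝ} (hz : z = 4*(t*(1-t))) (n : ℕ) :
    z * (poch (1/2) n * ((Nat.factorial n : ℝ))^3 / ((poch 2 n)^3) * z ^ n / (Nat.factorial n))
      = 4 * (cb n / ((n:ℝ)+1)^3 * (t*(1-t))^(n+1)) := by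
  have hfne : (Nat.factorial n : ℝ) ≠ 0 := by
    exact_mod_cast Nat.factorial_ne_zero n
  have hn1 : ((n:ℝ)+1) ≠ 0 := by positivity
  have h4 : ((4:ℝ))^n ≠ 0 := by positivity
  have hP : poch (1/2) n = (Nat.factorial (2*n) : ℝ) / ((4:ℝ)^n * (Nat.factorial n : ℝ)) := by
    rw [eq_div_iff (by positivity)]
    linear_combination poch_half n
  have hp2' : poch 2 n = ((n:ℝ)+1) * (Nat.factorial n : ℝ) := by
    rw [poch_two, Nat.factorial_succ]
    push_cast
    ring
  rw [hP, hp2', ← cb_fact n, hz, mul_pow 4 (t*(1-t)) n]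
  field_simp
  ring

theorem fourF3_half_one_polylog (z : ℝ) (hz0 : 0 ≤ z) (hz1 : z < 1) :
    z * ∑' n : ℕ,
        poch (1/2) n * ((Nat.factorial n : ℝ))^3 / ((poch 2 n)^3) * z ^ n / (Nat.factorial n) =
      -4 * Li2 (1/2 - Real.sqrt (1 - z) / 2) - 8 * Real.sqrt (1 - z)
        + 2 * (Real.log (Real.sqrt (1 - z) + 1))^2
        - 4 * Real.log 2 * Real.log (Real.sqrt (1 - z) + 1)
        + 8 * Real.log (Real.sqrt (1 - z) + 1) + 8
        + 2 * (Real.log 2)^2 - 8 * Real.log 2 := by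
  have h1z : (0:ℝ) ≤ 1 - z := by linarith
  set u := Real.sqrt (1 - z) with hudef
  have hu2 : u^2 = 1 - z := Real.sq_sqrt h1z
  have hupos : 0 < u := Real.sqrt_pos.mpr (by linarith)
  have hule : u ≤ 1 := by nlinarith
  set t := (1 - u)/2 with htdef
  have hu_eq : u = 1 - 2*t := by rw [htdef]; ring
  have ht0 : 0 ≤ t := by rw [htdef]; linarith
  have htlt : t < 1/2 := by rw [htdef]; linarith
  have hz4 : z = 4*(t*(1-t)) := by
    linear_combination hu2 - (u + 1 - 2*t)*hu_eq
  set c : ℝ := t/2 + 1/4 with hcdef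
  have hc0 : 0 < c := by rw [hcdef]; linarith
  have hc : c < 1/2 := by rw [hcdef]; linarith
  have ht1 : -(1/100) < t := by linarith
  have ht2 : t < c := by rw [hcdef]; linarith
  have h1tne : (1:ℝ) - t ≠ 0 := by intro h; linarith
  -- LHS
  have hLHS : z * ∑' n : ℕ,
      poch (1/2) n * ((Nat.factorial n : ℝ))^3 / ((poch 2 n)^3) * z ^ n / (Nat.factorial n)
      = 4 * ∑' n : ℕ, cb n / ((n:ℝ)+1)^3 * (t*(1-t))^(n+1) := by
    rw [← tsum_mul_left, ← tsum_mul_left]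
    exact tsum_congr (term_eq hz4)
  rw [hLHS, claim3 hc0 hc ht1 ht2]
  -- RHS
  have harg : (1/2 - u/2 : ℝ) = t := by rw [htdef]; ring
  rw [harg]
  have hLi2 : Li2 t = ∑' k : ℕ, t^(k+1)/((k:ℝ)+1)^2 := rfl
  have hlogu : Real.log (u + 1) = Real.log 2 + Real.log (1-t) := by
    rw [show u + 1 = 2*(1-t) from by rw [hu_eq]; ring,
      Real.log_mul two_ne_zero h1tne]
  rw [hlogu, hLi2, hu_eq]
  ring
end

section
/- ₅F₄(1/2, 2/3, 1, 1, 4/3; 5/6, 7/6, 3/2, 3/2; −1) = 3π²/32 + (3/4)·log²(√2+1) − (3/8)·log²(2−√3). -/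
open Real MeasureTheory Filter Set intervalIntegral Topology

namespace SandAux

lemma poch_succ (a : ℝ) (n : ℕ) : poch a (n+1) = poch a n * (a + n) :=
  Finset.prod_range_succ _ _

lemma poch_pos {a : ℝ} (ha : 0 < a) (n : ℕ) : 0 < poch a n := by
  induction n with
  | zero => norm_num [poch]
  | succ n ih =>
    rw [poch_succ]
    exact mul_pos ih (by positivity)

lemma poch_one (n : ℕ) : poch 1 n = (n.factorial : ℝ) := by
  induction n with
  | zero => simp [poch]
  | succ n ih =>
    rw [poch_succ, ih, Nat.factorial_succ]
    push_cast; ring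


lemma fact_cast_succ (k : ℕ) : (((k+1).factorial : ℕ) : ℝ) = ((k:ℝ)+1) * (k.factorial : ℝ) := by
  rw [Nat.factorial_succ]; push_cast; ring

lemma pochA (n : ℕ) :
    poch (2/3) n * (n.factorial : ℝ) * poch (4/3) n * 27^n = ((3*n+1).factorial : ℝ) := by
  induction n with
  | zero => simp [poch]
  | succ n ih =>
    have f1 : (((3*(n+1)+1).factorial : ℕ) : ℝ)
        = (3*(n:ℝ)+4) * ((3*(n:ℝ)+3) * ((3*(n:ℝ)+2) * (((3*n+1).factorial : ℕ) : ℝ))) := by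
      rw [show 3*(n+1)+1 = ((3*n+1)+1+1)+1 by omega, fact_cast_succ ((3*n+1)+1+1),
        fact_cast_succ ((3*n+1)+1), fact_cast_succ (3*n+1)]
      push_cast; ring
    rw [poch_succ, poch_succ, fact_cast_succ n, f1]
    push_cast
    linear_combination (27 * (2/3 + (n:ℝ)) * (1 + (n:ℝ)) * (4/3 + (n:ℝ))) * ih

lemma pochB (n : ℕ) :
    poch (5/6) n * poch (7/6) n * poch (3/2) n * (27^n * 2^(6*n+1) * 3) *
      ((3*n+1).factorial : ℝ) = ((6*n+3).factorial : ℝ) := by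
  induction n with
  | zero => simp [poch]; norm_num [Nat.factorial]
  | succ n ih =>
    have e3 : 27^(n+1) = (27:ℝ)^n * 27 := by ring
    have e4 : 2^(6*(n+1)+1) = (2:ℝ)^(6*n+1) * 64 := by
      rw [show 6*(n+1)+1 = (6*n+1) + 6 by omega, pow_add]; norm_num
    have f1 : (((3*(n+1)+1).factorial : ℕ) : ℝ)
        = (3*(n:ℝ)+4) * ((3*(n:ℝ)+3) * ((3*(n:ℝ)+2) * (((3*n+1).factorial : ℕ) : ℝ))) := by
      rw [show 3*(n+1)+1 = ((3*n+1)+1+1)+1 by omega, fact_cast_succ ((3*n+1)+1+1),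
        fact_cast_succ ((3*n+1)+1), fact_cast_succ (3*n+1)]
      push_cast; ring
    have f2 : (((6*(n+1)+3).factorial : ℕ) : ℝ)
        = (6*(n:ℝ)+9) * ((6*(n:ℝ)+8) * ((6*(n:ℝ)+7) * ((6*(n:ℝ)+6) * ((6*(n:ℝ)+5) *
          ((6*(n:ℝ)+4) * (((6*n+3).factorial : ℕ) : ℝ)))))) := by
      rw [show 6*(n+1)+3 = (((((6*n+3)+1+1)+1+1)+1)+1) by omega,
        fact_cast_succ ((((6*n+3)+1+1)+1+1)+1), fact_cast_succ ((((6*n+3)+1+1)+1+1)),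
        fact_cast_succ (((6*n+3)+1+1)+1), fact_cast_succ ((6*n+3)+1+1),
        fact_cast_succ ((6*n+3)+1), fact_cast_succ (6*n+3)]
      push_cast; ring
    rw [poch_succ, poch_succ, poch_succ, e3, e4, f1, f2]
    push_cast
    linear_combination ((5/6 + (n:ℝ)) * (7/6 + (n:ℝ)) * (3/2 + (n:ℝ)) * 1728 *
      ((3*(n:ℝ)+2) * (3*(n:ℝ)+3) * (3*(n:ℝ)+4))) * ih

lemma poch32 (n : ℕ) : poch (3/2) n = (2*(n:ℝ)+1) * poch (1/2) n := by
  induction n with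
  | zero => simp [poch]
  | succ n ih =>
    rw [poch_succ, poch_succ, ih]
    push_cast; ring

/-- The Wallis integrals on `[0, π/2]`. -/
noncomputable def IS (k : ℕ) : ℝ := ∫ x in (0:ℝ)..(π/2), sin x ^ k

lemma IS_zero : IS 0 = π/2 := by simp [IS]

lemma IS_one : IS 1 = 1 := by simp [IS, integral_sin]

lemma IS_rec (n : ℕ) : IS (n+2) = ((n:ℝ)+1)/((n:ℝ)+2) * IS n := by
  have := integral_sin_pow (a := 0) (b := π/2) n
  simp only [Real.sin_zero, Real.cos_pi_div_two, mul_zero, zero_mul, zero_pow, sub_zero,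
    ne_eq] at this
  rw [IS, IS, this]
  norm_num

lemma IS_pos (k : ℕ) : 0 < IS k := by
  rw [IS]
  apply intervalIntegral.intervalIntegral_pos_of_pos_on
  · exact (Continuous.pow (by continuity) k).intervalIntegrable _ _
  · intro x hx
    exact pow_pos (Real.sin_pos_of_pos_of_lt_pi hx.1 (by linarith [hx.2, pi_pos])) k
  · positivity

lemma IS_antitone (n : ℕ) : IS (n+1) ≤ IS n := by
  rw [IS, IS]
  apply intervalIntegral.integral_mono_on (by positivity)
  · exact (Continuous.pow (by continuity) _).intervalIntegrable _ _
  · exact (Continuous.pow (by continuity) _).intervalIntegrable _ _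
  · intro x hx
    exact pow_le_pow_of_le_one (Real.sin_nonneg_of_nonneg_of_le_pi hx.1
      (by linarith [hx.2, pi_pos])) (Real.sin_le_one x) (Nat.le_succ n)

lemma IS_mul (n : ℕ) : IS n * IS (n+1) = π / (2*((n:ℝ)+1)) := by
  induction n with
  | zero => rw [IS_zero, IS_one]; norm_num
  | succ n ih =>
    have h1 : ((n:ℝ)+1) ≠ 0 := by positivity
    have h2 : ((n:ℝ)+2) ≠ 0 := by positivity
    rw [show n+1+1 = n+2 from rfl, IS_rec n,
      show IS (n+1) * (((n:ℝ)+1)/((n:ℝ)+2) * IS n)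
        = (((n:ℝ)+1)/((n:ℝ)+2)) * (IS n * IS (n+1)) from by ring, ih]
    push_cast
    field_simp
    ring

lemma IS_odd (m : ℕ) :
    IS (2*m+1) * ((2*m+1).factorial : ℝ) = 4^m * ((m.factorial : ℝ))^2 := by
  induction m with
  | zero => simp [IS_one]
  | succ m ih =>
    have f1 : (((2*(m+1)+1).factorial : ℕ) : ℝ)
        = (2*(m:ℝ)+3) * ((2*(m:ℝ)+2) * (((2*m+1).factorial : ℕ) : ℝ)) := by
      rw [show 2*(m+1)+1 = ((2*m+1)+1)+1 by omega, fact_cast_succ ((2*m+1)+1),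
        fact_cast_succ (2*m+1)]
      push_cast; ring
    have hrec : IS (2*(m+1)+1) * (2*(m:ℝ)+3) = (2*(m:ℝ)+2) * IS (2*m+1) := by
      have h : (2*(m:ℝ)+1+2) ≠ 0 := by positivity
      rw [show 2*(m+1)+1 = (2*m+1)+2 by omega, IS_rec (2*m+1)]
      push_cast
      field_simp
      ring
    rw [f1, fact_cast_succ m]
    push_cast
    linear_combination ((2*(m:ℝ)+2)^2) * ih
      + ((2*(m:ℝ)+2) * (((2*m+1).factorial : ℕ) : ℝ)) * hrec


lemma term_key (n : ℕ) :
    (poch (1/2) n * poch (2/3) n * ((n.factorial : ℕ) : ℝ) * ((n.factorial : ℕ) : ℝ) *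
      poch (4/3) n) * (2*(2*(n:ℝ)+1))
    = 3 * IS (6*n+3) * (poch (5/6) n * poch (7/6) n * poch (3/2) n * poch (3/2) n *
        ((n.factorial : ℕ) : ℝ)) := by
  have c1 : poch (1/2) n * poch (2/3) n * ((n.factorial : ℕ) : ℝ) * ((n.factorial : ℕ) : ℝ) *
      poch (4/3) n * 27^n
      = poch (1/2) n * ((n.factorial : ℕ) : ℝ) * (((3*n+1).factorial : ℕ) : ℝ) := by
    linear_combination (poch (1/2) n * ((n.factorial : ℕ) : ℝ)) * pochA n
  have c2 : (poch (5/6) n * poch (7/6) n * poch (3/2) n * poch (3/2) n *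
        ((n.factorial : ℕ) : ℝ)) * (27^n * 2^(6*n+1) * 3) * (((3*n+1).factorial : ℕ) : ℝ)
      = (((6*n+3).factorial : ℕ) : ℝ) * ((2*(n:ℝ)+1) * poch (1/2) n) *
        ((n.factorial : ℕ) : ℝ) := by
    linear_combination (poch (3/2) n * ((n.factorial : ℕ) : ℝ)) * pochB n
      + ((((6*n+3).factorial : ℕ) : ℝ) * ((n.factorial : ℕ) : ℝ)) * poch32 n
  have hIS : IS (6*n+3) * (((6*n+3).factorial : ℕ) : ℝ)
      = 2^(6*n+2) * ((((3*n+1).factorial : ℕ) : ℝ))^2 := by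
    have h := IS_odd (3*n+1)
    rw [show 2*(3*n+1)+1 = 6*n+3 by omega] at h
    rw [h, show (4:ℝ)^(3*n+1) = 2^(6*n+2) by
      rw [show (4:ℝ) = 2^2 by norm_num, ← pow_mul, show 2*(3*n+1) = 6*n+2 by omega]]
  have hM : (27:ℝ)^n * (27^n * 2^(6*n+1) * 3) * (((3*n+1).factorial : ℕ) : ℝ) *
      (((6*n+3).factorial : ℕ) : ℝ) ≠ 0 := by positivity
  apply mul_right_cancel₀ hM
  linear_combination
    (2*(2*(n:ℝ)+1) * ((27:ℝ)^n * 2^(6*n+1) * 3) * (((3*n+1).factorial : ℕ) : ℝ) *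
      (((6*n+3).factorial : ℕ) : ℝ)) * c1
    - (3 * IS (6*n+3) * (27:ℝ)^n * (((6*n+3).factorial : ℕ) : ℝ)) * c2
    - (3 * (2*(n:ℝ)+1) * poch (1/2) n * ((n.factorial : ℕ) : ℝ) * (27:ℝ)^n *
        (((6*n+3).factorial : ℕ) : ℝ)) * hIS

lemma term_eq (n : ℕ) :
    poch (1/2) n * poch (2/3) n * poch 1 n * poch 1 n * poch (4/3) n
      / (poch (5/6) n * poch (7/6) n * poch (3/2) n * poch (3/2) n * (Nat.factorial n))
      * (-1 : ℝ) ^ n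
    = (3/2) * ((-1:ℝ)^n * IS (6*n+3) / (2*(n:ℝ)+1)) := by
  have h56 := poch_pos (show (0:ℝ) < 5/6 by norm_num) n
  have h76 := poch_pos (show (0:ℝ) < 7/6 by norm_num) n
  have h32 := poch_pos (show (0:ℝ) < 3/2 by norm_num) n
  have hfac : (0:ℝ) < ((n.factorial : ℕ) : ℝ) := by
    exact_mod_cast n.factorial_pos
  have h2n : (0:ℝ) < 2*(n:ℝ)+1 := by positivity
  rw [poch_one]
  have hD : poch (5/6) n * poch (7/6) n * poch (3/2) n * poch (3/2) n *
      ((n.factorial : ℕ) : ℝ) ≠ 0 := by positivity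
  field_simp
  apply mul_right_cancel₀ hfac.ne'
  linear_combination term_key n


lemma b_summable : Summable (fun n : ℕ => IS (6*n+3) / (2*(n:ℝ)+1)) := by
  have key : ∀ n : ℕ, IS (6*n+3) ≤ Real.sqrt π / (2 * Real.sqrt ((n:ℝ)+1)) := by
    intro n
    have hmono := IS_antitone (6*n+2)
    have hmul := IS_mul (6*n+2)
    have hcast : ((6*n+2 : ℕ):ℝ) + 1 = 6*(n:ℝ)+3 := by push_cast; ring
    rw [hcast] at hmul
    have h1 : IS (6*n+3)^2 ≤ π/(2*(6*(n:ℝ)+3)) := by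
      have h3 := IS_pos (6*n+3)
      have h4 := IS_pos (6*n+2)
      have h5 : IS (6*n+2+1) = IS (6*n+3) := by norm_num
      rw [h5] at hmono hmul
      nlinarith
    have h2 : IS (6*n+3) ≤ Real.sqrt (π/(2*(6*(n:ℝ)+3))) := by
      rw [show IS (6*n+3) = Real.sqrt (IS (6*n+3)^2) from (Real.sqrt_sq (IS_pos _).le).symm]
      exact Real.sqrt_le_sqrt h1
    refine h2.trans ?_
    have e : Real.sqrt π / (2 * Real.sqrt ((n:ℝ)+1)) = Real.sqrt (π / (4*((n:ℝ)+1))) := by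
      rw [Real.sqrt_div pi_pos.le, Real.sqrt_mul (by norm_num : (0:ℝ) ≤ 4),
        show Real.sqrt 4 = 2 from by
          rw [show (4:ℝ) = 2^2 by norm_num, Real.sqrt_sq (by norm_num : (0:ℝ) ≤ 2)]]
    rw [e]
    apply Real.sqrt_le_sqrt
    rw [div_le_div_iff₀ (by positivity) (by positivity)]
    nlinarith [pi_pos]
  have hc : Summable (fun n : ℕ => (Real.sqrt π/2) * (1/((n:ℝ)+1)^((3:ℝ)/2))) := by
    apply Summable.mul_left
    have h := (Real.summable_one_div_nat_rpow (p := (3:ℝ)/2)).mpr (by norm_num)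
    have h2 := (summable_nat_add_iff (f := fun n : ℕ => 1/((n:ℝ))^((3:ℝ)/2)) 1).mpr h
    apply h2.congr
    intro n
    push_cast
    ring
  apply Summable.of_nonneg_of_le _ _ hc
  · intro n
    exact div_nonneg (IS_pos _).le (by positivity)
  · intro n
    have hs : (0:ℝ) < Real.sqrt ((n:ℝ)+1) := Real.sqrt_pos.mpr (by positivity)
    have hrpow : ((n:ℝ)+1)^((3:ℝ)/2) = ((n:ℝ)+1) * Real.sqrt ((n:ℝ)+1) := by
      rw [show (3:ℝ)/2 = 1 + 1/2 by norm_num, Real.rpow_add (by positivity), Real.rpow_one,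
        ← Real.sqrt_eq_rpow]
    have step1 : IS (6*n+3) / (2*(n:ℝ)+1)
        ≤ (Real.sqrt π / (2 * Real.sqrt ((n:ℝ)+1))) / ((n:ℝ)+1) :=
      div_le_div₀ (by positivity) (key n) (by positivity) (by linarith)
    refine step1.trans (le_of_eq ?_)
    rw [hrpow, div_div, mul_one_div, div_div]
    ring_nf

lemma partA :
    (∑' n : ℕ, poch (1/2) n * poch (2/3) n * poch 1 n * poch 1 n * poch (4/3) n
      / (poch (5/6) n * poch (7/6) n * poch (3/2) n * poch (3/2) n * (Nat.factorial n))
      * (-1 : ℝ) ^ n)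
    = (3/2) * ∫ x in Ioo (0:ℝ) (π/2), arctan (sin x ^ 3) := by
  rw [tsum_congr term_eq, tsum_mul_left]
  congr 1
  have hIS_Ioo : ∀ k : ℕ, ∫ x in Ioo (0:ℝ) (π/2), sin x ^ k = IS k := by
    intro k
    rw [IS, intervalIntegral.integral_of_le (by positivity), integral_Ioc_eq_integral_Ioo]
  set f : ℕ → ℝ → ℝ := fun n x => ((-1:ℝ)^n / (2*(n:ℝ)+1)) * sin x ^ (6*n+3) with hf
  have hcont : ∀ n, Continuous (f n) := by
    intro n; exact continuous_const.mul (Real.continuous_sin.pow _)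
  have hmeas : ∀ n, AEStronglyMeasurable (f n) (volume.restrict (Ioo 0 (π/2))) := fun n =>
    (hcont n).aestronglyMeasurable
  have hint : ∀ n, IntegrableOn (f n) (Ioo (0:ℝ) (π/2)) := fun n =>
    ((hcont n).integrableOn_Icc (a := 0) (b := π/2)).mono_set Ioo_subset_Icc_self
  have hval : ∀ n, ∫ x in Ioo (0:ℝ) (π/2), f n x = (-1:ℝ)^n * IS (6*n+3) / (2*(n:ℝ)+1) := by
    intro n
    rw [hf]
    rw [MeasureTheory.integral_const_mul, hIS_Ioo]
    ring
  have habs : ∀ n, ∫ x in Ioo (0:ℝ) (π/2), ‖f n x‖ = IS (6*n+3) / (2*(n:ℝ)+1) := by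
    intro n
    have : ∀ x ∈ Ioo (0:ℝ) (π/2), ‖f n x‖ = (1/(2*(n:ℝ)+1)) * sin x ^ (6*n+3) := by
      intro x hx
      have hsx : 0 ≤ sin x := Real.sin_nonneg_of_nonneg_of_le_pi hx.1.le
        (by nlinarith [hx.2, pi_pos])
      rw [hf]
      simp only [norm_mul, norm_div, norm_pow, Real.norm_eq_abs, abs_neg, abs_one, one_pow,
        abs_of_nonneg hsx, abs_of_pos (show (0:ℝ) < 2*(n:ℝ)+1 by positivity)]
    rw [setIntegral_congr_fun measurableSet_Ioo this, MeasureTheory.integral_const_mul, hIS_Ioo]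
    ring
  have hlint : ∀ n, ∫⁻ x in Ioo (0:ℝ) (π/2), ‖f n x‖ₑ
      = ENNReal.ofReal (IS (6*n+3) / (2*(n:ℝ)+1)) := by
    intro n
    rw [← ofReal_integral_norm_eq_lintegral_enorm (hint n), habs n]
  have hfin : (∑' n : ℕ, ∫⁻ x in Ioo (0:ℝ) (π/2), ‖f n x‖ₑ) ≠ ⊤ := by
    simp_rw [hlint]
    rw [← ENNReal.ofReal_tsum_of_nonneg (fun n => div_nonneg (IS_pos _).le (by positivity))
      b_summable]
    exact ENNReal.ofReal_ne_top
  have swap := MeasureTheory.integral_tsum hmeas hfin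
  calc (∑' n : ℕ, (-1:ℝ)^n * IS (6*n+3) / (2*(n:ℝ)+1))
      = ∑' n : ℕ, ∫ x in Ioo (0:ℝ) (π/2), f n x := by
        exact tsum_congr fun n => (hval n).symm
    _ = ∫ x in Ioo (0:ℝ) (π/2), ∑' n, f n x := swap.symm
    _ = ∫ x in Ioo (0:ℝ) (π/2), arctan (sin x ^ 3) := by
        apply setIntegral_congr_fun measurableSet_Ioo
        intro x hx
        have hs0 : 0 < sin x := Real.sin_pos_of_pos_of_lt_pi hx.1 (by nlinarith [hx.2, pi_pos])
        have hs1 : sin x < 1 := by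
          have := Real.strictMonoOn_sin (a := x) (b := π/2)
            ⟨by linarith [hx.1, pi_pos], hx.2.le⟩ ⟨by linarith [pi_pos], le_refl _⟩ hx.2
          rwa [Real.sin_pi_div_two] at this
        have hcube : ‖sin x ^ 3‖ < 1 := by
          rw [Real.norm_eq_abs, abs_of_pos (by positivity)]
          exact pow_lt_one₀ hs0.le hs1 (by norm_num)
        have hsum := (Real.hasSum_arctan hcube).tsum_eq
        dsimp only
        rw [← hsum]
        apply tsum_congr
        intro n
        rw [hf]
        simp only []
        rw [← pow_mul, show 3 * (2*n+1) = 6*n+3 by ring]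
        push_cast
        ring

/-! ### atnh : inverse hyperbolic tangent -/

noncomputable def atnh (t : ℝ) : ℝ := (Real.log (1+t) - Real.log (1-t))/2

lemma atnh_zero : atnh 0 = 0 := by simp [atnh]

lemma hasDerivAt_atnh {t : ℝ} (h1 : -1 < t) (h2 : t < 1) :
    HasDerivAt atnh (1/(1-t^2)) t := by
  have d1 : HasDerivAt (fun s : ℝ => Real.log (1+s)) (1/(1+t)) t := by
    simpa using (HasDerivAt.log ((hasDerivAt_id t).const_add 1)
      (by simp only [id_eq]; exact ne_of_gt (by linarith)))
  have d2 : HasDerivAt (fun s : ℝ => Real.log (1-s)) ((-1)/(1-t)) t := by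
    simpa using (HasDerivAt.log ((hasDerivAt_id t).const_sub 1)
      (by simp only [id_eq]; exact ne_of_gt (by linarith)))
  have h := (d1.sub d2).div_const 2
  refine h.congr_deriv (Eq.symm ?_)
  have e1 : (1:ℝ)+t ≠ 0 := by linarith
  have e2 : (1:ℝ)-t ≠ 0 := by linarith
  have e3 : (1:ℝ)-t^2 ≠ 0 := by nlinarith
  field_simp
  ring

lemma continuousAt_atnh {t : ℝ} (h1 : -1 < t) (h2 : t < 1) : ContinuousAt atnh t :=
  (hasDerivAt_atnh h1 h2).continuousAt

lemma atnh_nonneg {t : ℝ} (h0 : 0 ≤ t) (h1 : t < 1) : 0 ≤ atnh t := by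
  have := Real.log_le_log (by linarith : (0:ℝ) < 1-t) (by linarith : (1:ℝ)-t ≤ 1+t)
  simp only [atnh]
  linarith

lemma atnh_le {t : ℝ} (h0 : 0 ≤ t) (h1 : t < 1) : atnh t ≤ t/(1-t) := by
  have hlog : Real.log (1+t) - Real.log (1-t) = Real.log ((1+t)/(1-t)) :=
    (Real.log_div (show (1:ℝ)+t ≠ 0 by linarith) (show (1:ℝ)-t ≠ 0 by linarith)).symm
  have h1t : (1:ℝ) - t ≠ 0 := by linarith
  have hle := Real.log_le_sub_one_of_pos
    (div_pos (show (0:ℝ) < 1+t by linarith) (show (0:ℝ) < 1-t by linarith))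
  have he : (1+t)/(1-t) - 1 = 2*t/(1-t) := by field_simp; ring
  simp only [atnh, hlog]
  rw [he] at hle
  have h2 : 2*t/(1-t) = 2*(t/(1-t)) := by ring
  rw [h2] at hle
  linarith

lemma atnh_le_log {t : ℝ} (h0 : 0 ≤ t) (h1 : t < 1) :
    atnh t ≤ (Real.log 2 - Real.log (1-t))/2 := by
  have := Real.log_le_log (by linarith : (0:ℝ) < 1+t) (by linarith : (1:ℝ)+t ≤ 2)
  simp only [atnh]
  linarith

lemma meas_atnh : Measurable atnh :=
  ((Real.measurable_log.comp (measurable_const.add measurable_id)).sub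
    (Real.measurable_log.comp (measurable_const.sub measurable_id))).div_const 2

lemma atnh_sqrt2 : atnh (Real.sqrt 2 / 2) = Real.log (Real.sqrt 2 + 1) := by
  have hs : Real.sqrt 2 ^ 2 = 2 := Real.sq_sqrt (by norm_num)
  have hs0 : 0 < Real.sqrt 2 := Real.sqrt_pos.mpr (by norm_num)
  have hs2 : Real.sqrt 2 < 2 := by nlinarith
  have h1 : (0:ℝ) < 1 + Real.sqrt 2/2 := by nlinarith
  have h2 : (0:ℝ) < 1 - Real.sqrt 2/2 := by nlinarith
  have key : (1 + Real.sqrt 2/2)/(1 - Real.sqrt 2/2) = (Real.sqrt 2 + 1)^2 := by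
    rw [div_eq_iff h2.ne']
    nlinarith
  rw [atnh, ← Real.log_div h1.ne' h2.ne', key, Real.log_pow]
  push_cast
  ring

/-! ### basic integrability helpers on `Ioo 0 (π/2)` -/

lemma volIoo : volume (Ioo (0:ℝ) (π/2)) = ENNReal.ofReal (π/2) := by
  rw [Real.volume_Ioo, sub_zero]

lemma den_pos {b c : ℝ} (hb0 : 0 ≤ b) (hb1 : b < 1) (hc : -1 ≤ c) (hc2 : c ≤ 1) :
    0 < 1 - b^2*c^2 := by
  nlinarith [mul_nonneg (sub_nonneg.2 hc2) (by linarith : (0:ℝ) ≤ c + 1),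
    mul_pos (sub_pos.2 hb1) (by linarith : (0:ℝ) < b + 1),
    mul_nonneg (sq_nonneg b) (mul_nonneg (sub_nonneg.2 hc2) (by linarith : (0:ℝ) ≤ c + 1))]

lemma bdd_int {f : ℝ → ℝ} {C : ℝ}
    (hm : AEStronglyMeasurable f (volume.restrict (Ioo (0:ℝ) (π/2))))
    (h : ∀ x ∈ Ioo (0:ℝ) (π/2), ‖f x‖ ≤ C) : IntegrableOn f (Ioo (0:ℝ) (π/2)) := by
  refine ⟨hm, HasFiniteIntegral.restrict_of_bounded (C := C) ?_ ?_⟩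
  · rw [volIoo]; exact ENNReal.ofReal_lt_top
  · rw [ae_restrict_iff' measurableSet_Ioo]; exact .of_forall h

lemma arctan_int (g : ℝ → ℝ) (hg : Measurable g) :
    IntegrableOn (fun x => arctan (g x)) (Ioo (0:ℝ) (π/2)) := by
  apply bdd_int (Real.continuous_arctan.measurable.comp hg).aestronglyMeasurable
  intro x _
  rw [Real.norm_eq_abs, abs_le]
  exact ⟨(Real.neg_pi_div_two_lt_arctan _).le, (Real.arctan_lt_pi_div_two _).le⟩

lemma sin_lt_one' {θ : ℝ} (h1 : -(π/2) ≤ θ) (h2 : θ < π/2) : sin θ < 1 := by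
  have := Real.strictMonoOn_sin (a := θ) (b := π/2) ⟨h1, h2.le⟩
    ⟨by linarith [pi_pos], le_refl _⟩ h2
  simpa using this

lemma sin_mono {a b : ℝ} (h0 : -(π/2) ≤ a) (hab : a ≤ b) (hb : b ≤ π/2) : sin a ≤ sin b := by
  rcases eq_or_lt_of_le hab with h | h
  · rw [h]
  · exact (Real.strictMonoOn_sin ⟨h0, hab.trans hb⟩ ⟨by linarith, hb⟩ h).le

/-! ### the function `A` and its derivative -/

noncomputable def Afun (θ : ℝ) : ℝ := ∫ x in Ioo (0:ℝ) (π/2), arctan (tan θ * sin x)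

lemma inner_x {b : ℝ} (hb0 : 0 < b) (hb1 : b < 1) :
    ∫ x in Ioo (0:ℝ) (π/2), sin x / (1 - b^2 * cos x^2) = atnh b / b := by
  have hden : ∀ x : ℝ, 1 - b^2 * cos x^2 ≠ 0 := fun x =>
    (den_pos hb0.le hb1 (Real.neg_one_le_cos x) (Real.cos_le_one x)).ne' 
  have key : ∫ x in (0:ℝ)..(π/2), sin x / (1 - b^2*cos x^2) = atnh b / b := by
    have hF : ∀ x ∈ uIcc (0:ℝ) (π/2), HasDerivAt (fun y => -atnh (b * cos y) / b)
        (sin x / (1 - b^2*cos x^2)) x := by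
      intro x _
      have h1 := Real.neg_one_le_cos x
      have h2 := Real.cos_le_one x
      have hbc1 : -1 < b * cos x := by nlinarith
      have hbc2 : b * cos x < 1 := by nlinarith
      have hinner : HasDerivAt (fun y : ℝ => b * cos y) (b * (-sin x)) x :=
        (Real.hasDerivAt_cos x).const_mul b
      have h3 := ((hasDerivAt_atnh hbc1 hbc2).comp x hinner).neg.div_const b
      refine h3.congr_deriv (Eq.symm ?_)
      have e : (1:ℝ) - (b*cos x)^2 = 1 - b^2*cos x^2 := by ring
      rw [e]
      have hD := hden x
      have hb' := hb0.ne'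
      field_simp
    rw [integral_eq_sub_of_hasDerivAt hF]
    · simp [atnh_zero]
      ring
    · apply Continuous.intervalIntegrable
      exact Real.continuous_sin.div
        (continuous_const.sub (continuous_const.mul (Real.continuous_cos.pow 2))) hden
  rw [← key, intervalIntegral.integral_of_le (by positivity), integral_Ioc_eq_integral_Ioo]

lemma A_hasDeriv {θ : ℝ} (h1 : 0 < θ) (h2 : θ < π/2) :
    HasDerivAt Afun (atnh (sin θ) / sin θ) θ := by
  set θ₂ : ℝ := (θ + π/2)/2 with hθ₂
  have hθ₂lt : θ₂ < π/2 := by rw [hθ₂]; linarith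
  have hθθ₂ : θ < θ₂ := by rw [hθ₂]; linarith
  have hs2 : sin θ₂ < 1 := sin_lt_one' (by linarith [pi_pos]) hθ₂lt
  have hs2pos : 0 < sin θ₂ := Real.sin_pos_of_pos_of_lt_pi (by linarith) (by linarith [pi_pos])
  set ε : ℝ := min (θ/2) ((π/2 - θ)/2) with hε
  have hεpos : 0 < ε := by
    rw [hε]; apply lt_min <;> linarith
  have hball : ∀ θ' ∈ Metric.ball θ ε, 0 < θ' ∧ θ' ≤ θ₂ := by
    intro θ' hθ'
    rw [Metric.mem_ball, Real.dist_eq, abs_lt] at hθ'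
    have l1 : ε ≤ θ/2 := min_le_left _ _
    have l2 : ε ≤ (π/2 - θ)/2 := min_le_right _ _
    constructor
    · linarith [hθ'.1]
    · rw [hθ₂]; linarith [hθ'.2]
  have main := hasDerivAt_integral_of_dominated_loc_of_deriv_le (hs := Metric.ball_mem_nhds θ hεpos)
    (F := fun θ x => arctan (tan θ * sin x))
    (F' := fun θ x => sin x / (1 - sin θ^2 * cos x^2))
    (x₀ := θ) (bound := fun _ => (1 - sin θ₂^2)⁻¹)
    (μ := volume.restrict (Ioo (0:ℝ) (π/2)))
    (Eventually.of_forall fun θ' =>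
      (Real.continuous_arctan.comp (continuous_const.mul Real.continuous_sin)).aestronglyMeasurable)
    (arctan_int _ (measurable_const.mul Real.measurable_sin))
    ?meas' ?hbound ?boundint ?hdiff
  case meas' =>
    have hst : sin θ < 1 := sin_lt_one' (by linarith [pi_pos]) h2
    have hst0 : 0 < sin θ := Real.sin_pos_of_pos_of_lt_pi h1 (by linarith [pi_pos])
    have hden : ∀ x : ℝ, 1 - sin θ^2 * cos x^2 ≠ 0 := fun x =>
      (den_pos hst0.le hst (Real.neg_one_le_cos x) (Real.cos_le_one x)).ne'
    exact (Real.continuous_sin.div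
      (continuous_const.sub (continuous_const.mul (Real.continuous_cos.pow 2))) hden
      ).aestronglyMeasurable
  case hbound =>
    rw [ae_restrict_iff' measurableSet_Ioo]
    refine .of_forall fun x hx => fun θ' hθ' => ?_
    obtain ⟨hp1, hp2⟩ := hball θ' hθ'
    have hsθ' : 0 ≤ sin θ' := Real.sin_nonneg_of_nonneg_of_le_pi hp1.le
      (by linarith [hp2, hθ₂lt, pi_pos])
    have hmle : sin θ' ≤ sin θ₂ := sin_mono (by linarith [pi_pos]) hp2 hθ₂lt.le
    have hc1 := Real.neg_one_le_cos x
    have hc2 := Real.cos_le_one x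
    have hsx0 : 0 < sin x := Real.sin_pos_of_pos_of_lt_pi hx.1 (by nlinarith [hx.2, pi_pos])
    have hsx1 : sin x ≤ 1 := Real.sin_le_one x
    have hden2 : 1 - sin θ₂^2 ≤ 1 - sin θ'^2 * cos x^2 := by
      nlinarith [mul_nonneg (mul_nonneg hsθ' hsθ')
          (by nlinarith [sq_nonneg (cos x)] : (0:ℝ) ≤ 1 - cos x^2),
        mul_nonneg (sub_nonneg.2 hmle) (by linarith : (0:ℝ) ≤ sin θ₂ + sin θ')]
    have hdenpos : 0 < 1 - sin θ₂^2 := by nlinarith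
    have hd' : 0 < 1 - sin θ'^2*cos x^2 := lt_of_lt_of_le hdenpos hden2
    rw [Real.norm_eq_abs, abs_of_nonneg (le_of_lt (div_pos hsx0 hd'))]
    refine le_trans (div_le_div₀ zero_le_one hsx1 hdenpos hden2) (le_of_eq (one_div _))
  case boundint =>
    have hdp : 0 < 1 - sin θ₂^2 := by nlinarith
    exact bdd_int aestronglyMeasurable_const
      (fun x _ => le_of_eq (by rw [Real.norm_eq_abs, abs_of_pos (inv_pos.2 hdp)]))
  case hdiff =>
    rw [ae_restrict_iff' measurableSet_Ioo]
    refine .of_forall fun x hx => fun θ' hθ' => ?_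
    obtain ⟨hp1, hp2⟩ := hball θ' hθ'
    have hcosθ' : 0 < cos θ' := Real.cos_pos_of_mem_Ioo ⟨by linarith [pi_pos], by linarith⟩
    have htan : HasDerivAt (fun u => tan u * sin x) (1/cos θ'^2 * sin x) θ' :=
      (Real.hasDerivAt_tan hcosθ'.ne').mul_const _
    have harc := htan.arctan
    refine harc.congr_deriv (Eq.symm ?_)
    have hpy := Real.sin_sq_add_cos_sq θ'
    have hpyx := Real.sin_sq_add_cos_sq x
    have key : cos θ'^2 * (1 + (tan θ' * sin x)^2) = 1 - sin θ'^2 * cos x^2 := by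
      rw [Real.tan_eq_sin_div_cos]
      field_simp
      linear_combination hpy + sin θ'^2 * hpyx
    show sin x / (1 - sin θ'^2 * cos x^2) = 1 / (1 + (tan θ' * sin x)^2) * (1/cos θ'^2 * sin x)
    rw [← key]
    rw [div_eq_mul_inv, mul_inv]
    ring
  have hres := main.2
  have hb0 : 0 < sin θ := Real.sin_pos_of_pos_of_lt_pi h1 (by linarith [pi_pos])
  have hb1 : sin θ < 1 := sin_lt_one' (by linarith [pi_pos]) h2
  rwa [inner_x hb0 hb1] at hres

/-! ### bounds for the `atnh` integrands -/

lemma sqrt2_lt : Real.sqrt 2 < 3/2 := by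
  nlinarith [Real.sq_sqrt (show (0:ℝ) ≤ 2 by norm_num), Real.sqrt_nonneg 2]

lemma sin_le_34 {θ : ℝ} (h0 : 0 ≤ θ) (h1 : θ ≤ π/4) : sin θ ≤ 3/4 := by
  have h := sin_mono (by linarith [pi_pos]) h1 (by linarith [pi_pos])
  rw [Real.sin_pi_div_four] at h
  nlinarith [sqrt2_lt]

lemma cos_ge_half {ψ : ℝ} (h0 : 0 ≤ ψ) (h1 : ψ ≤ π/4) : 1/2 ≤ cos ψ := by
  have h : sin (π/4) ≤ sin (π/2 - ψ) := sin_mono (by linarith [pi_pos]) (by linarith)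
    (by linarith)
  rw [Real.sin_pi_div_two_sub, Real.sin_pi_div_four] at h
  nlinarith [Real.sq_sqrt (show (0:ℝ) ≤ 2 by norm_num), Real.sqrt_nonneg 2]

lemma cos_lt_one' {ψ : ℝ} (h0 : 0 < ψ) (h1 : ψ ≤ π/2) : cos ψ < 1 := by
  rw [← Real.sin_pi_div_two_sub]
  exact sin_lt_one' (by linarith [pi_pos]) (by linarith)

lemma G_nonneg {θ : ℝ} (h0 : 0 < θ) (h2 : θ < π/2) : 0 ≤ atnh (sin θ)/sin θ := by
  have hs0 : 0 < sin θ := Real.sin_pos_of_pos_of_lt_pi h0 (by linarith [pi_pos])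
  exact div_nonneg (atnh_nonneg hs0.le (sin_lt_one' (by linarith [pi_pos]) h2)) hs0.le

lemma G_bound {θ : ℝ} (h0 : 0 < θ) (h1 : θ ≤ π/4) : atnh (sin θ)/sin θ ≤ 4 := by
  have hs0 : 0 < sin θ := Real.sin_pos_of_pos_of_lt_pi h0 (by nlinarith [pi_pos])
  have hs34 : sin θ ≤ 3/4 := sin_le_34 h0.le h1
  have hs1 : sin θ < 1 := by linarith
  have hle := atnh_le hs0.le hs1
  rw [div_le_iff₀ hs0]
  have h2 : sin θ/(1 - sin θ) ≤ 4 * sin θ := by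
    rw [div_le_iff₀ (by linarith)]
    nlinarith
  linarith

lemma atnh_sin_le {θ : ℝ} (h0 : 0 < θ) (h1 : θ ≤ π/4) : atnh (sin θ) ≤ 4*θ := by
  have hs0 : 0 < sin θ := Real.sin_pos_of_pos_of_lt_pi h0 (by nlinarith [pi_pos])
  have hs34 : sin θ ≤ 3/4 := sin_le_34 h0.le h1
  have hle := atnh_le hs0.le (by linarith)
  have h2 : sin θ/(1 - sin θ) ≤ 4 * sin θ := by
    rw [div_le_iff₀ (by linarith)]
    nlinarith
  have h3 : sin θ < θ := Real.sin_lt h0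
  linarith

lemma one_sub_cos_ge {ψ : ℝ} (h0 : 0 < ψ) (h1 : ψ ≤ π/4) : ψ^2/8 ≤ 1 - cos ψ := by
  have hcsq := Real.cos_sq (ψ/2)
  have hpy := Real.sin_sq_add_cos_sq (ψ/2)
  have hj := Real.mul_le_sin (x := ψ/2) (by positivity) (by linarith [pi_pos])
  have hsq : (2/π * (ψ/2))^2 ≤ sin (ψ/2)^2 :=
    pow_le_pow_left₀ (by positivity) hj 2
  have h2 : 2*(ψ/2) = ψ := by ring
  rw [h2] at hcsq
  have hpi := pi_pos
  have hpi4 := pi_le_four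
  have e : (2/π * (ψ/2))^2 = ψ^2/π^2 := by field_simp
  rw [e] at hsq
  have e2 : ψ^2/16 ≤ ψ^2/π^2 := by
    apply div_le_div_of_nonneg_left (by positivity) (by positivity)
    nlinarith
  nlinarith

lemma atnh_cos_le {ψ : ℝ} (h0 : 0 < ψ) (h1 : ψ ≤ π/4) :
    atnh (cos ψ) ≤ 2 + 2/Real.sqrt ψ := by
  have hc0 : (0:ℝ) < cos ψ := by linarith [cos_ge_half h0.le h1]
  have hc1 : cos ψ < 1 := cos_lt_one' h0 (by linarith [pi_pos])
  have step1 := atnh_le_log hc0.le hc1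
  have h2 := one_sub_cos_ge h0 h1
  have h3 : Real.log (ψ^2/8) ≤ Real.log (1 - cos ψ) :=
    Real.log_le_log (by positivity) h2
  have h4 : Real.log (ψ^2/8) = 2*Real.log ψ - Real.log 8 := by
    rw [Real.log_div (by positivity) (by norm_num), Real.log_pow]
    push_cast; ring
  have hs0 : 0 < Real.sqrt ψ := Real.sqrt_pos.mpr h0
  have h6 := Real.log_le_sub_one_of_pos (show (0:ℝ) < 1/Real.sqrt ψ by positivity)
  rw [one_div, Real.log_inv, Real.log_sqrt h0.le] at h6
  -- h6 : -(log ψ / 2) ≤ (√ψ)⁻¹ - 1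
  have hlog2 : Real.log 2 < 1 := by
    have := Real.log_lt_sub_one_of_pos (show (0:ℝ) < 2 by norm_num) (by norm_num)
    linarith
  have hlog8 : Real.log 8 = 3 * Real.log 2 := by
    rw [show (8:ℝ) = 2^3 by norm_num, Real.log_pow]; push_cast; ring
  have hinv : (Real.sqrt ψ)⁻¹ = 1/Real.sqrt ψ := (one_div _).symm
  rw [hinv] at h6
  have hlog2pos := Real.log_pos (by norm_num : (1:ℝ) < 2)
  -- atnh(cos ψ) ≤ (log 2 - log(1-cos ψ))/2 ≤ (log 2 + log 8 - 2 log ψ)/2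
  --             = 2 log 2 - log ψ ≤ 2 log 2 + 2/√ψ - 2 ≤ 2 + 2/√ψ
  have hd : 0 < 1/Real.sqrt ψ := by positivity
  rw [show 2 + 2/Real.sqrt ψ = 2 + 2*(1/Real.sqrt ψ) from by ring]
  linarith

lemma atnh_cos_div_le {ψ : ℝ} (h0 : 0 < ψ) (h1 : ψ ≤ π/4) :
    atnh (cos ψ)/cos ψ ≤ 4 + 4/Real.sqrt ψ := by
  have hch := cos_ge_half h0.le h1
  have hc0 : (0:ℝ) < cos ψ := by linarith
  have hc1 : cos ψ < 1 := cos_lt_one' h0 (by linarith [pi_pos])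
  have hnn : 0 ≤ atnh (cos ψ) := atnh_nonneg hc0.le hc1
  have hb := atnh_cos_le h0 h1
  have hs0 : 0 < Real.sqrt ψ := Real.sqrt_pos.mpr h0
  rw [div_le_iff₀ hc0]
  have : (4 + 4/Real.sqrt ψ) * cos ψ ≥ (4 + 4/Real.sqrt ψ) * (1/2) := by
    apply mul_le_mul_of_nonneg_left hch (by positivity)
  have h2 : (4 + 4/Real.sqrt ψ) * (1/2) = 2 + 2/Real.sqrt ψ := by ring
  linarith

lemma atnh_cos_nonneg {ψ : ℝ} (h0 : 0 < ψ) (h1 : ψ ≤ π/4) : 0 ≤ atnh (cos ψ)/cos ψ := by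
  have hch := cos_ge_half h0.le h1
  exact div_nonneg (atnh_nonneg (by linarith) (cos_lt_one' h0 (by linarith [pi_pos])))
    (by linarith)

/-! ### interval integrability of the two integrands on `(0, π/4)` -/

lemma meas_G1 : AEStronglyMeasurable (fun θ => atnh (sin θ)/sin θ)
    (volume.restrict (Set.uIoc (0:ℝ) (π/4))) :=
  ((meas_atnh.comp Real.measurable_sin).div Real.measurable_sin).aestronglyMeasurable

lemma meas_G2 : AEStronglyMeasurable (fun θ => atnh (cos θ)/cos θ)
    (volume.restrict (Set.uIoc (0:ℝ) (π/4))) :=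
  ((meas_atnh.comp Real.measurable_cos).div Real.measurable_cos).aestronglyMeasurable

lemma uIoc_pi4 : Set.uIoc (0:ℝ) (π/4) = Ioc (0:ℝ) (π/4) := uIoc_of_le (by positivity)

lemma G_int1 : IntervalIntegrable (fun θ => atnh (sin θ)/sin θ) volume 0 (π/4) := by
  apply IntervalIntegrable.mono_fun' (g := fun _ => (4:ℝ)) intervalIntegrable_const meas_G1
  rw [uIoc_pi4, Filter.EventuallyLE, ae_restrict_iff' measurableSet_Ioc]
  refine .of_forall fun θ hθ => ?_
  rw [Real.norm_eq_abs, abs_of_nonneg (G_nonneg hθ.1 (by nlinarith [hθ.2, pi_pos]))]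
  exact G_bound hθ.1 hθ.2

lemma bound_int : IntervalIntegrable (fun ψ : ℝ => 4 + 4*ψ^(-(1:ℝ)/2)) volume 0 (π/4) :=
  intervalIntegrable_const.add
    ((intervalIntegral.intervalIntegrable_rpow' (by norm_num)).const_mul 4)

lemma G_int2 : IntervalIntegrable (fun ψ => atnh (cos ψ)/cos ψ) volume 0 (π/4) := by
  apply IntervalIntegrable.mono_fun' bound_int meas_G2
  rw [uIoc_pi4, Filter.EventuallyLE, ae_restrict_iff' measurableSet_Ioc]
  refine .of_forall fun ψ hψ => ?_
  have hs0 : 0 < Real.sqrt ψ := Real.sqrt_pos.mpr hψ.1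
  have hrpow : ψ^(-(1:ℝ)/2) = 1/Real.sqrt ψ := by
    rw [Real.sqrt_eq_rpow, one_div, ← Real.rpow_neg hψ.1.le]
    norm_num
  rw [Real.norm_eq_abs, abs_of_nonneg (atnh_cos_nonneg hψ.1 hψ.2), hrpow,
    show 4 + 4*(1/Real.sqrt ψ) = 4 + 4/Real.sqrt ψ from by ring]
  exact atnh_cos_div_le hψ.1 hψ.2

/-! ### limits of `A` -/

lemma Afun_zero_right : Tendsto Afun (𝓝[>] (0:ℝ)) (𝓝 0) := by
  have key : Tendsto Afun (𝓝[>] (0:ℝ)) (𝓝 (∫ x in Ioo (0:ℝ) (π/2), (0:ℝ))) := by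
    apply MeasureTheory.tendsto_integral_filter_of_dominated_convergence (bound := fun _ => π/2)
    · exact Eventually.of_forall fun θ =>
        (Real.continuous_arctan.comp
          (continuous_const.mul Real.continuous_sin)).aestronglyMeasurable
    · refine Eventually.of_forall fun θ => Eventually.of_forall fun x => ?_
      rw [Real.norm_eq_abs, abs_le]
      exact ⟨(Real.neg_pi_div_two_lt_arctan _).le, (Real.arctan_lt_pi_div_two _).le⟩
    · exact bdd_int aestronglyMeasurable_const
        (fun x _ => le_of_eq (by rw [Real.norm_eq_abs, abs_of_pos (by positivity)]))
    · refine Eventually.of_forall fun x => ?_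
      have hc : ContinuousAt (fun θ : ℝ => arctan (tan θ * sin x)) 0 := by
        apply Real.continuous_arctan.continuousAt.comp
        exact (Real.continuousAt_tan.2 (by simp)).mul continuousAt_const
      have h := hc.tendsto
      simp only [Real.tan_zero, zero_mul, Real.arctan_zero] at h
      exact h.mono_left nhdsWithin_le_nhds
  simpa using key

lemma Afun_cont {θ : ℝ} (h1 : 0 < θ) (h2 : θ < π/2) : ContinuousAt Afun θ :=
  (A_hasDeriv h1 h2).continuousAt

lemma Afun_pi_left : Tendsto Afun (𝓝[<] (π/2)) (𝓝 (π^2/4)) := by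
  have hval : (π^2/4 : ℝ) = ∫ x in Ioo (0:ℝ) (π/2), (π/2 : ℝ) := by
    rw [setIntegral_const, measureReal_def, volIoo, ENNReal.toReal_ofReal (by positivity), smul_eq_mul]
    ring
  rw [hval]
  apply MeasureTheory.tendsto_integral_filter_of_dominated_convergence (bound := fun _ => π/2)
  · exact Eventually.of_forall fun θ =>
      (Real.continuous_arctan.comp (continuous_const.mul Real.continuous_sin)).aestronglyMeasurable
  · refine Eventually.of_forall fun θ => Eventually.of_forall fun x => ?_
    rw [Real.norm_eq_abs, abs_le]
    exact ⟨(Real.neg_pi_div_two_lt_arctan _).le, (Real.arctan_lt_pi_div_two _).le⟩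
  · exact bdd_int aestronglyMeasurable_const
      (fun x _ => le_of_eq (by rw [Real.norm_eq_abs, abs_of_pos (by positivity)]))
  · rw [ae_restrict_iff' measurableSet_Ioo]
    refine Eventually.of_forall fun x hx => ?_
    have hsx : 0 < sin x := Real.sin_pos_of_pos_of_lt_pi hx.1 (by nlinarith [hx.2, pi_pos])
    have h1 : Tendsto (fun θ : ℝ => tan θ * sin x) (𝓝[<] (π/2)) atTop :=
      Real.tendsto_tan_pi_div_two.atTop_mul_const hsx
    have h2 := (Real.tendsto_arctan_atTop.comp h1).mono_right nhdsWithin_le_nhds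
    exact h2

/-! ### the three interval integrals -/

lemma int1_eq : ∫ θ in (0:ℝ)..(π/4), atnh (sin θ)/sin θ = Afun (π/4) := by
  have h := intervalIntegral.integral_eq_sub_of_hasDerivAt_of_tendsto
    (f := Afun) (f' := fun θ => atnh (sin θ)/sin θ)
    (a := 0) (b := π/4) (by positivity)
    (fun θ hθ => A_hasDeriv hθ.1 (by nlinarith [hθ.2, pi_pos]))
    G_int1 Afun_zero_right
    (((Afun_cont (by positivity) (by linarith [pi_pos])).tendsto).mono_left nhdsWithin_le_nhds)
  rw [h]; ring

lemma int2_eq : ∫ ψ in (0:ℝ)..(π/4), atnh (cos ψ)/cos ψ = π^2/4 - Afun (π/4) := by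
  have hmap : Tendsto (fun ψ : ℝ => π/2 - ψ) (𝓝[>] 0) (𝓝[<] (π/2)) := by
    apply tendsto_nhdsWithin_of_tendsto_nhds_of_eventually_within
    · have hcont : Tendsto (fun ψ : ℝ => π/2 - ψ) (𝓝 (0:ℝ)) (𝓝 (π/2 - 0)) :=
        (Continuous.tendsto (by continuity : Continuous (fun ψ : ℝ => π/2 - ψ)) 0)
      rw [sub_zero] at hcont
      exact hcont.mono_left nhdsWithin_le_nhds
    · refine eventually_nhdsWithin_of_forall fun ψ hψ => ?_
      simp only [mem_Iio]
      have : (0:ℝ) < ψ := hψ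
      linarith
  have ha : Tendsto (fun ψ : ℝ => -Afun (π/2 - ψ)) (𝓝[>] 0) (𝓝 (-(π^2/4))) :=
    (Afun_pi_left.comp hmap).neg
  have hb : Tendsto (fun ψ : ℝ => -Afun (π/2 - ψ)) (𝓝[<] (π/4)) (𝓝 (-Afun (π/4))) := by
    have hc : ContinuousAt (fun ψ : ℝ => -Afun (π/2 - ψ)) (π/4) := by
      apply ContinuousAt.neg
      have h1 : ContinuousAt Afun (π/2 - π/4) :=
        Afun_cont (by linarith [pi_pos]) (by linarith [pi_pos])
      exact h1.comp ((continuous_const.sub continuous_id).continuousAt)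
    have := hc.tendsto
    rw [show π/2 - π/4 = π/4 by ring] at this
    exact this.mono_left nhdsWithin_le_nhds
  have h := intervalIntegral.integral_eq_sub_of_hasDerivAt_of_tendsto
    (f := fun ψ => -Afun (π/2 - ψ)) (f' := fun ψ => atnh (cos ψ)/cos ψ)
    (a := 0) (b := π/4) (by positivity)
    (fun ψ hψ => by
      have hA := A_hasDeriv (θ := π/2 - ψ) (by linarith [hψ.2, pi_pos]) (by linarith [hψ.1])
      have hin : HasDerivAt (fun ψ : ℝ => π/2 - ψ) (-1) ψ := (hasDerivAt_id ψ).const_sub (π/2)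
      have hcomp := (hA.comp ψ hin).neg
      have he : atnh (sin (π/2 - ψ))/sin (π/2 - ψ) * (-1) = -(atnh (cos ψ)/cos ψ) := by
        rw [Real.sin_pi_div_two_sub]; ring
      rw [he] at hcomp
      rw [neg_neg] at hcomp
      exact hcomp)
    G_int2 ha hb
  rw [h]; ring

lemma refl_sub : ∫ ψ in (0:ℝ)..(π/4), (atnh (cos ψ)/cos ψ - atnh (sin ψ)/sin ψ)
    = (Real.log (Real.sqrt 2 + 1))^2 := by
  set F : ℝ → ℝ := fun ψ => atnh (sin ψ) * atnh (cos ψ) with hF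
  have hL : F (π/4) = (Real.log (Real.sqrt 2 + 1))^2 := by
    rw [hF]
    simp only [Real.sin_pi_div_four, Real.cos_pi_div_four]
    rw [atnh_sqrt2]; ring
  have ht1 : Tendsto F (𝓝[<] (π/4)) (𝓝 ((Real.log (Real.sqrt 2 + 1))^2)) := by
    rw [← hL]
    have hc : ContinuousAt F (π/4) := by
      have hs1 : sin (π/4) < 1 := sin_lt_one' (by linarith [pi_pos]) (by linarith [pi_pos])
      have hs0 : 0 < sin (π/4) := Real.sin_pos_of_pos_of_lt_pi (by positivity)
        (by linarith [pi_pos])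
      have hc1 : cos (π/4) < 1 := cos_lt_one' (by positivity) (by linarith [pi_pos])
      have hc0 : (0:ℝ) < cos (π/4) := by
        have := cos_ge_half (show (0:ℝ) ≤ π/4 by positivity) (le_refl (π/4))
        linarith
      exact ((continuousAt_atnh (by linarith) hs1).comp
        Real.continuous_sin.continuousAt).mul
        ((continuousAt_atnh (by linarith) hc1).comp Real.continuous_cos.continuousAt)
    exact hc.tendsto.mono_left nhdsWithin_le_nhds
  have ht0 : Tendsto F (𝓝[>] (0:ℝ)) (𝓝 0) := by
    have hub : Tendsto (fun ψ : ℝ => 8*ψ + 8*Real.sqrt ψ) (𝓝[>] (0:ℝ)) (𝓝 0) := by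
      have hcont : Continuous (fun ψ : ℝ => 8*ψ + 8*Real.sqrt ψ) :=
        (continuous_const.mul continuous_id).add
          (continuous_const.mul Real.continuous_sqrt)
      have := hcont.tendsto 0
      simp only [mul_zero, Real.sqrt_zero, add_zero, id_eq] at this
      exact this.mono_left nhdsWithin_le_nhds
    have hmem : Ioo (0:ℝ) (π/4) ∈ 𝓝[>] (0:ℝ) :=
      Ioo_mem_nhdsGT_of_mem ⟨le_refl _, by positivity⟩
    apply tendsto_of_tendsto_of_tendsto_of_le_of_le' tendsto_const_nhds hub
    · filter_upwards [hmem] with ψ hψ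
      have hψ' : (0:ℝ) < ψ := hψ.1
      have hle : ψ ≤ π/4 := hψ.2.le
      have hs0 : 0 < sin ψ := Real.sin_pos_of_pos_of_lt_pi hψ' (by nlinarith [pi_pos])
      have hch := cos_ge_half hψ'.le hle
      exact mul_nonneg (atnh_nonneg hs0.le (by linarith [sin_le_34 hψ'.le hle]))
        (atnh_nonneg (by linarith) (cos_lt_one' hψ' (by linarith [pi_pos])))
    · filter_upwards [hmem] with ψ hψ
      have hψ' : (0:ℝ) < ψ := hψ.1
      have hle : ψ ≤ π/4 := hψ.2.le
      have h1 := atnh_sin_le hψ' hle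
      have h2 := atnh_cos_le hψ' hle
      have hch := cos_ge_half hψ'.le hle
      have hnn2 : 0 ≤ atnh (cos ψ) :=
        atnh_nonneg (by linarith) (cos_lt_one' hψ' (by linarith [pi_pos]))
      have hs0 : 0 < sin ψ := Real.sin_pos_of_pos_of_lt_pi hψ' (by nlinarith [pi_pos])
      have hnn1 : 0 ≤ atnh (sin ψ) :=
        atnh_nonneg hs0.le (by linarith [sin_le_34 hψ'.le hle])
      have hmul := mul_le_mul h1 h2 hnn2 (by linarith : (0:ℝ) ≤ 4*ψ)
      have hsq0 : 0 < Real.sqrt ψ := Real.sqrt_pos.mpr hψ'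
      calc F ψ ≤ 4*ψ*(2 + 2/Real.sqrt ψ) := hmul
        _ = 8*ψ + 8*(ψ/Real.sqrt ψ) := by ring
        _ = 8*ψ + 8*Real.sqrt ψ := by rw [Real.div_sqrt]
  have hderiv : ∀ ψ ∈ Ioo (0:ℝ) (π/4),
      HasDerivAt F (atnh (cos ψ)/cos ψ - atnh (sin ψ)/sin ψ) ψ := by
    intro ψ hψ
    have hψ' := hψ.1
    have hle : ψ ≤ π/4 := hψ.2.le
    have hs0 : 0 < sin ψ := Real.sin_pos_of_pos_of_lt_pi hψ' (by nlinarith [pi_pos])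
    have hs1 : sin ψ < 1 := by linarith [sin_le_34 hψ'.le hle]
    have hch := cos_ge_half hψ'.le hle
    have hc0 : (0:ℝ) < cos ψ := by linarith
    have hc1 : cos ψ < 1 := cos_lt_one' hψ' (by linarith [pi_pos])
    have d1 : HasDerivAt (fun ψ => atnh (sin ψ)) (1/(1 - sin ψ^2) * cos ψ) ψ :=
      (hasDerivAt_atnh (by linarith) hs1).comp ψ (Real.hasDerivAt_sin ψ)
    have d2 : HasDerivAt (fun ψ => atnh (cos ψ)) (1/(1 - cos ψ^2) * (-sin ψ)) ψ :=
      (hasDerivAt_atnh (by linarith) hc1).comp ψ (Real.hasDerivAt_cos ψ)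
    have dF := d1.mul d2
    refine dF.congr_deriv (Eq.symm ?_)
    have e1 : 1 - sin ψ^2 = cos ψ^2 := by nlinarith [Real.sin_sq_add_cos_sq ψ]
    have e2 : 1 - cos ψ^2 = sin ψ^2 := by nlinarith [Real.sin_sq_add_cos_sq ψ]
    rw [e1, e2]
    field_simp
    ring
  have h := intervalIntegral.integral_eq_sub_of_hasDerivAt_of_tendsto
    (f := F) (f' := fun ψ => atnh (cos ψ)/cos ψ - atnh (sin ψ)/sin ψ)
    (a := 0) (b := π/4) (by positivity) hderiv (G_int2.sub G_int1) ht0 ht1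
  rw [h]; ring

lemma J1val : Afun (π/4) = π^2/8 - (Real.log (Real.sqrt 2 + 1))^2/2 := by
  have h4 : ∫ ψ in (0:ℝ)..(π/4), (atnh (cos ψ)/cos ψ - atnh (sin ψ)/sin ψ)
      = (π^2/4 - Afun (π/4)) - Afun (π/4) := by
    rw [intervalIntegral.integral_sub G_int2 G_int1, int1_eq, int2_eq]
  rw [refl_sub] at h4
  linarith

/-! ### Part 4 : the integral `V = ∫ arctan (sin x / cos² x)` -/

noncomputable def pa (a : ℝ) : ℝ := Real.sqrt (a^2+2*a)
noncomputable def ra (a : ℝ) : ℝ := Real.sqrt (2*a-a^2)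
noncomputable def Cfun (a : ℝ) : ℝ := ∫ x in Ioo (0:ℝ) (π/2), arctan (a * (sin x/cos x^2))
noncomputable def Gaux (a u : ℝ) : ℝ :=
  (Real.log (u^2 - pa a*u + a) - Real.log (u^2 + pa a*u + a))/(4*pa a)
    + Real.arctan ((u - a/u)/ra a)/(2*ra a)
noncomputable def qfun (a : ℝ) : ℝ :=
  Real.log (1+a-pa a)/(2*pa a) + (π/2 + arctan ((1-a)/ra a))/(2*ra a)

section Part4

variable {a : ℝ}

lemma pa_sq (h0 : 0 < a) : pa a^2 = a^2+2*a := Real.sq_sqrt (by positivity)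

lemma pa_pos (h0 : 0 < a) : 0 < pa a := Real.sqrt_pos.mpr (by positivity)

lemma pa_lt (h0 : 0 < a) : pa a < 1+a := by
  have h := pa_sq h0
  nlinarith [pa_pos h0]

lemma ra_sq (h0 : 0 < a) (h1 : a < 1) : ra a^2 = 2*a-a^2 :=
  Real.sq_sqrt (by nlinarith)

lemma ra_pos (h0 : 0 < a) (h1 : a < 1) : 0 < ra a :=
  Real.sqrt_pos.mpr (by nlinarith)

lemma Qpos (h0 : 0 < a) (h1 : a < 1) (u : ℝ) : 0 < u^4 - a^2*u^2 + a^2 := by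
  nlinarith [sq_nonneg (2*u^2 - a^2), mul_pos (mul_pos h0 h0)
    (show (0:ℝ) < 4 - a^2 by nlinarith)]

lemma qfac (h0 : 0 < a) (u : ℝ) :
    (u^2 - pa a*u + a)*(u^2 + pa a*u + a) = u^4 - a^2*u^2 + a^2 := by
  linear_combination (-(u^2) : ℝ) * pa_sq h0

lemma qplus_pos (h0 : 0 < a) {u : ℝ} (hu : 0 ≤ u) : 0 < u^2 + pa a*u + a := by
  have := pa_pos h0
  nlinarith [sq_nonneg u]

lemma qminus_pos (h0 : 0 < a) (h1 : a < 1) {u : ℝ} (hu : 0 ≤ u) :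
    0 < u^2 - pa a*u + a := by
  rcases le_or_gt (u^2 - pa a*u + a) 0 with h | h
  · exfalso
    have h2 := mul_nonpos_of_nonpos_of_nonneg h (qplus_pos h0 hu).le
    rw [qfac h0] at h2
    linarith [Qpos h0 h1 u]
  · exact h

lemma Gderiv (h0 : 0 < a) (h1 : a < 1) {u : ℝ} (hu0 : 0 < u) :
    HasDerivAt (Gaux a) (u^2/(u^4 - a^2*u^2 + a^2)) u := by
  unfold Gaux
  set p := pa a with hp
  set r := ra a with hr
  have hp2 : p^2 = a^2 + 2*a := pa_sq h0
  have hr2 : r^2 = 2*a - a^2 := ra_sq h0 h1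
  have hppos : 0 < p := pa_pos h0
  have hrpos : 0 < r := ra_pos h0 h1
  have hqm : 0 < u^2 - p*u + a := qminus_pos h0 h1 hu0.le
  have hqp : 0 < u^2 + p*u + a := qplus_pos h0 hu0.le
  have hfac : (u^2 - p*u + a)*(u^2 + p*u + a) = u^4 - a^2*u^2 + a^2 := qfac h0 u
  have hQ := Qpos h0 h1 u
  have hsq : HasDerivAt (fun u : ℝ => u^2) (2*u) u := by
    simpa using hasDerivAt_pow 2 u
  have hqmd : HasDerivAt (fun u : ℝ => u^2 - p*u + a) (2*u - p) u := by
    simpa using (hsq.sub ((hasDerivAt_id u).const_mul p)).add_const a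
  have hqpd : HasDerivAt (fun u : ℝ => u^2 + p*u + a) (2*u + p) u := by
    simpa using (hsq.add ((hasDerivAt_id u).const_mul p)).add_const a
  have dlogm := hqmd.log hqm.ne'
  have dlogp := hqpd.log hqp.ne'
  have hainv : HasDerivAt (fun u : ℝ => a/u) (-(a/u^2)) u := by
    have := ((hasDerivAt_id u).inv hu0.ne').const_mul a
    simpa [div_eq_mul_inv] using this
  have hwd : HasDerivAt (fun u : ℝ => (u - a/u)/r) ((1 + a/u^2)/r) u := by
    have := ((hasDerivAt_id u).sub hainv).div_const r
    simpa [sub_neg_eq_add] using this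
  have darc := hwd.arctan
  have total := (((dlogm.sub dlogp).div_const (4*p)).add (darc.div_const (2*r)))
  refine total.congr_deriv (Eq.symm ?_)
  have hwsq : 1 + ((u - a/u)/r)^2 = (u^4 - a^2*u^2 + a^2)/(r^2*u^2) := by
    field_simp
    linear_combination (u^2 : ℝ) * hr2
  have e1 : ((2*u - p)/(u^2-p*u+a) - (2*u+p)/(u^2+p*u+a))/(4*p)
      = (u^2-a)/(2*(u^4 - a^2*u^2 + a^2)) := by
    rw [div_sub_div _ _ hqm.ne' hqp.ne']
    rw [show (2*u - p)*(u^2+p*u+a) - (u^2-p*u+a)*(2*u+p) = 2*p*(u^2 - a) from by ring,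
      hfac]
    field_simp
    ring
  have e2 : 1/(1 + ((u-a/u)/r)^2) * ((1 + a/u^2)/r)/(2*r)
      = (u^2+a)/(2*(u^4 - a^2*u^2 + a^2)) := by
    rw [hwsq]
    field_simp
  rw [e1, e2]
  field_simp
  ring

lemma den4_pos (h0 : 0 < a) (h1 : a < 2) (x : ℝ) : 0 < cos x^4 + a^2*sin x^2 := by
  have h := Real.sin_sq_add_cos_sq x
  nlinarith [sq_nonneg (cos x^2 - a^2/2), mul_pos (mul_pos h0 h0)
    (show (0:ℝ) < 4 - a^2 by nlinarith), sq_nonneg (sin x), sq_nonneg (cos x),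
    sq_nonneg (cos x^2 - a^2/2*sin x^2)]

lemma inner4 (h0 : 0 < a) (h1 : a < 1) :
    ∫ x in Ioo (0:ℝ) (π/2), (sin x * cos x^2) / (cos x^4 + a^2*sin x^2) = qfun a := by
  have hp2 := pa_sq h0
  have hr2 := ra_sq h0 h1
  have hppos := pa_pos h0
  have hrpos := ra_pos h0 h1
  have h1ap : 0 < 1+a-pa a := by linarith [pa_lt h0]
  have hIoc : ∫ x in Ioo (0:ℝ) (π/2), (sin x * cos x^2) / (cos x^4 + a^2*sin x^2)
      = ∫ x in (0:ℝ)..(π/2), (sin x * cos x^2) / (cos x^4 + a^2*sin x^2) := by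
    rw [intervalIntegral.integral_of_le (by positivity), integral_Ioc_eq_integral_Ioo]
  have hderiv : ∀ x ∈ Ioo (0:ℝ) (π/2),
      HasDerivAt (fun x => -Gaux a (cos x))
        ((sin x * cos x^2) / (cos x^4 + a^2*sin x^2)) x := by
    intro x hx
    have hcx : 0 < cos x := Real.cos_pos_of_mem_Ioo ⟨by linarith [hx.1, pi_pos], hx.2⟩
    have hcomp := ((Gderiv h0 h1 hcx).comp x (Real.hasDerivAt_cos x)).neg
    have he : -(cos x^2/(cos x^4 - a^2*cos x^2 + a^2) * -sin x)
        = (sin x * cos x^2) / (cos x^4 + a^2*sin x^2) := by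
      have hpy := Real.sin_sq_add_cos_sq x
      have hd1 : cos x^4 - a^2*cos x^2 + a^2 = cos x^4 + a^2*sin x^2 := by
        linear_combination (-(a^2) : ℝ) * hpy
      rw [hd1]
      ring
    rw [he] at hcomp
    exact hcomp
  have hcont4 : Continuous (fun x => (sin x * cos x^2) / (cos x^4 + a^2*sin x^2)) :=
    (Real.continuous_sin.mul (Real.continuous_cos.pow 2)).div
      ((Real.continuous_cos.pow 4).add
        (continuous_const.mul (Real.continuous_sin.pow 2))) (fun x => (den4_pos h0 (by linarith) x).ne')
  have hGc1 : ContinuousAt (Gaux a) 1 := by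
    have hqm := qminus_pos h0 h1 (show (0:ℝ) ≤ 1 by norm_num)
    have hqp := qplus_pos h0 (show (0:ℝ) ≤ 1 by norm_num)
    unfold Gaux
    apply ContinuousAt.add
    · apply ContinuousAt.div_const
      apply ContinuousAt.sub
      · exact (Real.continuousAt_log (by simpa using hqm.ne')).comp (by fun_prop)
      · exact (Real.continuousAt_log (by simpa using hqp.ne')).comp (by fun_prop)
    · apply ContinuousAt.div_const
      apply Real.continuous_arctan.continuousAt.comp
      apply ContinuousAt.div_const
      exact continuousAt_id.sub (continuousAt_const.div continuousAt_id (by norm_num))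
  have hF0 : Tendsto (fun x => -Gaux a (cos x)) (𝓝[>] (0:ℝ)) (𝓝 (-Gaux a 1)) := by
    have hcos0 : Tendsto (fun x : ℝ => cos x) (𝓝[>] (0:ℝ)) (𝓝 1) := by
      have := Real.continuous_cos.tendsto 0
      rw [Real.cos_zero] at this
      exact this.mono_left nhdsWithin_le_nhds
    exact (hGc1.tendsto.comp hcos0).neg
  have hcos_t : Tendsto (fun x : ℝ => cos x) (𝓝[<] (π/2)) (𝓝[>] 0) := by
    apply tendsto_nhdsWithin_of_tendsto_nhds_of_eventually_within
    · have := Real.continuous_cos.tendsto (π/2)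
      rw [Real.cos_pi_div_two] at this
      exact this.mono_left nhdsWithin_le_nhds
    · filter_upwards [Ioo_mem_nhdsLT_of_mem
        (show π/2 ∈ Ioc (0:ℝ) (π/2) from ⟨by positivity, le_refl _⟩)] with x hx
      exact Real.cos_pos_of_mem_Ioo ⟨by linarith [hx.1, pi_pos], hx.2⟩
  have hGlim : Tendsto (fun u : ℝ => -Gaux a u) (𝓝[>] (0:ℝ)) (𝓝 (π/(4*(ra a)))) := by
    have hlog : Tendsto (fun u : ℝ => (Real.log (u^2 - (pa a)*u + a)
        - Real.log (u^2 + (pa a)*u + a))/(4*(pa a))) (𝓝[>] (0:ℝ)) (𝓝 0) := by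
      have hc : ContinuousAt (fun u : ℝ => (Real.log (u^2 - (pa a)*u + a)
          - Real.log (u^2 + (pa a)*u + a))/(4*(pa a))) 0 := by
        apply ContinuousAt.div_const
        apply ContinuousAt.sub
        · refine (Real.continuousAt_log ?_).comp (x := (0:ℝ))
            (f := fun u : ℝ => u^2 - (pa a)*u + a) (by fun_prop)
          simpa using h0.ne'
        · refine (Real.continuousAt_log ?_).comp (x := (0:ℝ))
            (f := fun u : ℝ => u^2 + (pa a)*u + a) (by fun_prop)
          simpa using h0.ne'
      have h2 := hc.tendsto
      have he : ((Real.log ((0:ℝ)^2 - (pa a)*0 + a) - Real.log ((0:ℝ)^2 + (pa a)*0 + a))/(4*(pa a))) = 0 := by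
        norm_num
      rw [he] at h2
      exact h2.mono_left nhdsWithin_le_nhds
    have harc : Tendsto (fun u : ℝ => arctan ((u - a/u)/(ra a))/(2*(ra a))) (𝓝[>] (0:ℝ))
        (𝓝 ((-(π/2))/(2*(ra a)))) := by
      apply Tendsto.div_const
      have hat : Tendsto (fun u : ℝ => (a/u - u)/(ra a)) (𝓝[>] (0:ℝ)) atTop := by
        apply Tendsto.atTop_div_const hrpos
        apply Filter.Tendsto.atTop_add (f := fun u : ℝ => a/u) (g := fun u : ℝ => -u)
          (C := 0)
        · have := Filter.Tendsto.const_mul_atTop h0 tendsto_inv_nhdsGT_zero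
          simpa [div_eq_mul_inv] using this
        · have : Tendsto (fun u : ℝ => -u) (𝓝 (0:ℝ)) (𝓝 (-(0:ℝ))) :=
            (continuous_neg.tendsto 0)
          rw [neg_zero] at this
          exact this.mono_left nhdsWithin_le_nhds
      have harctan := (Real.tendsto_arctan_atTop.mono_right nhdsWithin_le_nhds).comp hat
      have hneg := harctan.neg
      have he : ∀ u : ℝ, -arctan ((a/u - u)/(ra a)) = arctan ((u - a/u)/(ra a)) := by
        intro u
        rw [← Real.arctan_neg]
        congr 1
        ring
      simp only [Function.comp_def] at hneg
      simp only [he] at hneg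
      exact hneg
    have hsum := hlog.add harc
    rw [show (0 + (-(π/2))/(2*(ra a)) : ℝ) = -(π/(4*(ra a))) from by ring] at hsum
    have := hsum.neg
    rw [neg_neg] at this
    apply this.congr
    intro u
    unfold Gaux
    ring
  have hFpi : Tendsto (fun x => -Gaux a (cos x)) (𝓝[<] (π/2)) (𝓝 (π/(4*(ra a)))) :=
    hGlim.comp hcos_t
  have hkey := intervalIntegral.integral_eq_sub_of_hasDerivAt_of_tendsto
    (f := fun x => -Gaux a (cos x))
    (f' := fun x => (sin x * cos x^2) / (cos x^4 + a^2*sin x^2))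
    (a := 0) (b := π/2) (by positivity) hderiv
    (hcont4.intervalIntegrable 0 (π/2)) hF0 hFpi
  have hkey2 : ∫ x in (0:ℝ)..(π/2), (sin x * cos x^2) / (cos x^4 + a^2*sin x^2)
      = π/(4*ra a) - -Gaux a 1 := hkey
  rw [hIoc, hkey2]
  have harg : (1:ℝ)^2 - (pa a)*1 + a = 1+a-(pa a) := by ring
  have harg2 : (1:ℝ)^2 + (pa a)*1 + a = 1+a+(pa a) := by ring
  have hprod : (1+a-(pa a))*(1+a+(pa a)) = 1 := by linear_combination (-1 : ℝ) * hp2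
  have hlogrel : Real.log (1+a+(pa a)) = -Real.log (1+a-(pa a)) := by
    have hinv : 1+a+(pa a) = (1+a-(pa a))⁻¹ := by
      field_simp
      linarith [hprod]
    rw [hinv, Real.log_inv]
  unfold Gaux qfun
  rw [harg, harg2, hlogrel]
  have ha1 : a/1 = a := by norm_num
  rw [ha1]
  field_simp
  ring

lemma g_meas : Measurable (fun x : ℝ => sin x/cos x^2) :=
  Real.measurable_sin.div ((Real.measurable_cos.pow_const 2))

lemma C_hasDeriv (h0 : 0 < a) (h1 : a < 1) : HasDerivAt Cfun (qfun a) a := by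
  have main := hasDerivAt_integral_of_dominated_loc_of_deriv_le (hs := Metric.ball_mem_nhds a (half_pos h0))
    (F := fun a x => arctan (a * (sin x/cos x^2)))
    (F' := fun a x => (sin x * cos x^2) / (cos x^4 + a^2*sin x^2))
    (x₀ := a) (bound := fun _ => 2/a)
    (μ := volume.restrict (Ioo (0:ℝ) (π/2)))
    (Eventually.of_forall fun a' =>
      (Real.continuous_arctan.measurable.comp (g_meas.const_mul a')).aestronglyMeasurable)
    (arctan_int _ (g_meas.const_mul a))
    ?meas' ?hbound ?boundint ?hdiff
  case meas' =>
    exact ((Real.continuous_sin.mul (Real.continuous_cos.pow 2)).div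
      ((Real.continuous_cos.pow 4).add (continuous_const.mul (Real.continuous_sin.pow 2)))
      (fun x => (den4_pos h0 (by linarith) x).ne')).aestronglyMeasurable
  case hbound =>
    rw [ae_restrict_iff' measurableSet_Ioo]
    refine .of_forall fun x hx a' ha' => ?_
    rw [Metric.mem_ball, Real.dist_eq, abs_lt] at ha'
    have ha2 : a/2 < a' := by linarith [ha'.1]
    have hsx : 0 < sin x := Real.sin_pos_of_pos_of_lt_pi hx.1 (by nlinarith [hx.2, pi_pos])
    have hcx : 0 < cos x := Real.cos_pos_of_mem_Ioo ⟨by linarith [hx.1, pi_pos], hx.2⟩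
    have hden := den4_pos (show 0 < a' by linarith) (show a' < 2 by linarith [ha'.2]) x
    rw [Real.norm_eq_abs, abs_of_nonneg (by positivity)]
    rw [div_le_div_iff₀ hden h0]
    nlinarith [mul_nonneg (mul_nonneg hsx.le (sq_nonneg (cos x)))
        (sq_nonneg (cos x^2 - a'*sin x)),
      sq_nonneg (cos x^2 - a'*sin x), mul_pos hsx (pow_pos hcx 2)]
  case boundint =>
    exact bdd_int aestronglyMeasurable_const
      (fun x _ => le_of_eq (by rw [Real.norm_eq_abs, abs_of_pos (by positivity)]))
  case hdiff =>
    rw [ae_restrict_iff' measurableSet_Ioo]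
    refine .of_forall fun x hx a' ha' => ?_
    have hcx : 0 < cos x := Real.cos_pos_of_mem_Ioo ⟨by linarith [hx.1, pi_pos], hx.2⟩
    have hd := ((hasDerivAt_id a').mul_const (sin x/cos x^2)).arctan
    refine hd.congr_deriv (Eq.symm ?_)
    dsimp only [id]
    have hpy := Real.sin_sq_add_cos_sq x
    field_simp
  have hres := main.2
  rwa [inner4 h0 h1] at hres

lemma Cfun_cont (a₀ : ℝ) : Tendsto Cfun (𝓝 a₀) (𝓝 (Cfun a₀)) := by
  apply MeasureTheory.tendsto_integral_filter_of_dominated_convergence (bound := fun _ => π/2)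
  · exact Eventually.of_forall fun a' =>
      (Real.continuous_arctan.measurable.comp (g_meas.const_mul a')).aestronglyMeasurable
  · refine Eventually.of_forall fun a' => Eventually.of_forall fun x => ?_
    rw [Real.norm_eq_abs, abs_le]
    exact ⟨(Real.neg_pi_div_two_lt_arctan _).le, (Real.arctan_lt_pi_div_two _).le⟩
  · exact bdd_int aestronglyMeasurable_const
      (fun x _ => le_of_eq (by rw [Real.norm_eq_abs, abs_of_pos (by positivity)]))
  · refine Eventually.of_forall fun x => ?_
    exact (Real.continuous_arctan.continuousAt.comp
      (continuousAt_id.mul continuousAt_const)).tendsto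

lemma Cfun_zero : Cfun 0 = 0 := by
  unfold Cfun
  simp

lemma pol_meas1 : Measurable (fun a : ℝ => a^2+2*a) :=
  (measurable_id.pow_const 2).add (measurable_id.const_mul 2)

lemma pol_meas2 : Measurable (fun a : ℝ => 2*a-a^2) :=
  (measurable_id.const_mul 2).sub (measurable_id.pow_const 2)

lemma meas_qfun : Measurable qfun := by
  unfold qfun pa ra
  apply Measurable.add
  · apply Measurable.div
    · exact Real.measurable_log.comp
        ((measurable_const.add measurable_id).sub
          (Real.continuous_sqrt.measurable.comp pol_meas1))
    · exact (Real.continuous_sqrt.measurable.comp pol_meas1).const_mul 2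
  · apply Measurable.div
    · apply Measurable.add measurable_const
      exact Real.measurable_arctan.comp
        ((measurable_const.sub measurable_id).div
          (Real.continuous_sqrt.measurable.comp pol_meas2))
    · exact (Real.continuous_sqrt.measurable.comp pol_meas2).const_mul 2

lemma q_bound {a : ℝ} (h0 : 0 < a) (h1 : a ≤ 1) : ‖qfun a‖ ≤ 2 + 2*(1/Real.sqrt a) := by
  have h1' : a < 1 ∨ a = 1 := lt_or_eq_of_le h1
  -- we prove the bound uniformly; note all quantities are fine also at a = 1
  have hp2 : pa a^2 = a^2+2*a := pa_sq h0
  have hppos := pa_pos h0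
  have hplt := pa_lt h0
  have h1ap : 0 < 1+a-pa a := by linarith
  have hale : a ≤ pa a := by
    have := Real.sqrt_le_sqrt (show a^2 ≤ a^2+2*a by nlinarith)
    rwa [Real.sqrt_sq h0.le] at this
  have hple : pa a ≤ a + 3/4 := by
    have := Real.sqrt_le_sqrt (show a^2+2*a ≤ (a+3/4)^2 by nlinarith)
    rwa [Real.sqrt_sq (by linarith)] at this
  have h14 : (1:ℝ)/4 ≤ 1+a-pa a := by linarith
  have hx1 : 1+a-pa a ≤ 1 := by linarith
  have hlognp : Real.log (1+a-pa a) ≤ 0 := Real.log_nonpos (by linarith) hx1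
  have hlogge : -Real.log (1+a-pa a) ≤ 4*pa a := by
    have h6 := Real.log_le_sub_one_of_pos (show (0:ℝ) < (1+a-pa a)⁻¹ by positivity)
    rw [Real.log_inv] at h6
    have h7 : (1+a-pa a)⁻¹ - 1 = (pa a - a)/(1+a-pa a) := by
      field_simp
      ring
    have h8 : (pa a - a)/(1+a-pa a) ≤ 4*(pa a - a) := by
      rw [div_le_iff₀ (by linarith)]
      nlinarith
    nlinarith
  have hfirst : |Real.log (1+a-pa a)/(2*pa a)| ≤ 2 := by
    rw [abs_div, abs_of_nonpos hlognp, abs_of_pos (show (0:ℝ) < 2*pa a by linarith),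
      div_le_iff₀ (show (0:ℝ) < 2*pa a by linarith)]
    nlinarith
  have hr2 : ra a^2 = 2*a-a^2 := Real.sq_sqrt (by nlinarith)
  have hrpos : 0 < ra a := Real.sqrt_pos.mpr (by nlinarith)
  have hrge : Real.sqrt a ≤ ra a := by
    apply Real.sqrt_le_sqrt
    nlinarith
  have hsa : 0 < Real.sqrt a := Real.sqrt_pos.mpr h0
  have hsecond : |(π/2 + arctan ((1-a)/ra a))/(2*ra a)| ≤ 2*(1/Real.sqrt a) := by
    have harc1 := Real.neg_pi_div_two_lt_arctan ((1-a)/ra a)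
    have harc2 := Real.arctan_lt_pi_div_two ((1-a)/ra a)
    have hnum : 0 ≤ π/2 + arctan ((1-a)/ra a) := by linarith
    rw [abs_div, abs_of_nonneg hnum, abs_of_pos (by positivity), div_le_iff₀ (by positivity)]
    have hπ : π/2 + arctan ((1-a)/ra a) ≤ π := by linarith
    have h2 : 2*(1/Real.sqrt a)*(2*ra a) = 4*(ra a/Real.sqrt a) := by ring
    rw [h2]
    have : (4:ℝ) ≤ 4*(ra a/Real.sqrt a) := by
      have : (1:ℝ) ≤ ra a/Real.sqrt a := by
        rw [le_div_iff₀ hsa]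
        linarith
      linarith
    calc π/2 + arctan ((1-a)/ra a) ≤ π := hπ
      _ ≤ 4 := pi_le_four
      _ ≤ 4*(ra a/Real.sqrt a) := this
  calc ‖qfun a‖ ≤ |Real.log (1+a-pa a)/(2*pa a)|
        + |(π/2 + arctan ((1-a)/ra a))/(2*ra a)| := by
        rw [Real.norm_eq_abs]; exact abs_add_le _ _
    _ ≤ 2 + 2*(1/Real.sqrt a) := add_le_add hfirst hsecond

lemma q_int : IntervalIntegrable qfun volume 0 1 := by
  have hbint : IntervalIntegrable (fun a : ℝ => 2 + 2*a^(-(1:ℝ)/2)) volume 0 1 :=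
    intervalIntegrable_const.add
      ((intervalIntegral.intervalIntegrable_rpow' (by norm_num)).const_mul 2)
  apply IntervalIntegrable.mono_fun' hbint meas_qfun.aestronglyMeasurable
  rw [uIoc_of_le (by norm_num : (0:ℝ) ≤ 1), Filter.EventuallyLE,
    ae_restrict_iff' measurableSet_Ioc]
  refine .of_forall fun a ha => ?_
  have hrpow : a^(-(1:ℝ)/2) = 1/Real.sqrt a := by
    rw [Real.sqrt_eq_rpow, one_div, ← Real.rpow_neg ha.1.le]
    norm_num
  rw [hrpow]
  exact q_bound ha.1 ha.2

noncomputable def Tfun (a : ℝ) : ℝ :=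
  -(Real.log (1+a-pa a))^2/4 + (π*Real.arccos (1-a) - (Real.arccos (1-a))^2/2)/2

lemma Tderiv (h0 : 0 < a) (h1 : a < 1) : HasDerivAt Tfun (qfun a) a := by
  have hp2 := pa_sq h0
  have hppos := pa_pos h0
  have h1ap : 0 < 1+a-pa a := by linarith [pa_lt h0]
  have hr2 : ra a^2 = 2*a-a^2 := ra_sq h0 h1
  have hrpos := ra_pos h0 h1
  have dp : HasDerivAt pa (1/(2*pa a) * (2*a+2)) a := by
    have hpoly : HasDerivAt (fun a : ℝ => a^2+2*a) (2*a+2) a := by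
      exact ((hasDerivAt_pow 2 a).add ((hasDerivAt_id a).const_mul 2)).congr_deriv (by simp)
    exact (Real.hasDerivAt_sqrt (by positivity)).comp a hpoly
  have dinner : HasDerivAt (fun a => 1+a-pa a) (1 - 1/(2*pa a) * (2*a+2)) a := by
    exact ((hasDerivAt_id a).const_add 1).sub dp
  have dlog := dinner.log h1ap.ne'
  have T1 : HasDerivAt (fun a => -(Real.log (1+a-pa a))^2/4)
      (-(2*Real.log (1+a-pa a) * ((1 - 1/(2*pa a) * (2*a+2))/(1+a-pa a)))/4) a := by
    have := (dlog.pow 2).neg.div_const 4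
    simpa [pow_one] using this
  have darccos : HasDerivAt (fun a => Real.arccos (1-a)) (1/ra a) a := by
    have hin : HasDerivAt (fun a : ℝ => 1-a) (-1) a := (hasDerivAt_id a).const_sub 1
    have h := (Real.hasDerivAt_arccos (by linarith : (1:ℝ)-a ≠ -1)
      (by linarith : (1:ℝ)-a ≠ 1)).comp a hin
    refine h.congr_deriv (Eq.symm ?_)
    rw [show (1:ℝ) - (1-a)^2 = 2*a-a^2 from by ring]
    unfold ra
    field_simp
  have T2 : HasDerivAt (fun a => (π*Real.arccos (1-a) - (Real.arccos (1-a))^2/2)/2)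
      ((π*(1/ra a) - Real.arccos (1-a)*(1/ra a))/2) a := by
    have h1' := darccos.const_mul π
    have h2' : HasDerivAt (fun a => (Real.arccos (1-a))^2/2)
        (Real.arccos (1-a)*(1/ra a)) a := by
      have := (darccos.pow 2).div_const 2
      refine this.congr_deriv (Eq.symm ?_)
      simp [pow_one]
      ring
    exact (h1'.sub h2').div_const 2
  have total := T1.add T2
  have harct : arctan ((1-a)/ra a) = π/2 - Real.arccos (1-a) := by
    have hχpos : 0 < Real.arccos (1-a) := Real.arccos_pos.2 (by linarith)
    have hχle : Real.arccos (1-a) ≤ π/2 := Real.arccos_le_pi_div_two.2 (by linarith)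
    have hcosχ : cos (Real.arccos (1-a)) = 1-a := Real.cos_arccos (by linarith) (by linarith)
    have hsinχ : sin (Real.arccos (1-a)) = ra a := by
      rw [Real.sin_arccos, show (1:ℝ) - (1-a)^2 = 2*a-a^2 from by ring]
      rfl
    have ht : Real.tan (π/2 - Real.arccos (1-a)) = (1-a)/ra a := by
      rw [Real.tan_pi_div_two_sub, Real.tan_eq_sin_div_cos, hcosχ, hsinχ, inv_div]
    rw [← ht, Real.arctan_tan (by linarith) (by linarith)]
  have heq : -(2*Real.log (1+a-pa a) * ((1 - 1/(2*pa a) * (2*a+2))/(1+a-pa a)))/4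
      + (π*(1/ra a) - Real.arccos (1-a)*(1/ra a))/2 = qfun a := by
    unfold qfun
    rw [harct]
    have e1 : (1 - 1/(2*pa a) * (2*a+2))/(1+a-pa a) = -(1/pa a) := by
      rw [div_eq_iff h1ap.ne']
      field_simp
      ring
    rw [e1]
    field_simp
    ring
  rw [← heq]
  unfold Tfun
  exact total

lemma pa_zero : pa 0 = 0 := by unfold pa; norm_num

lemma pa_one : pa 1 = Real.sqrt 3 := by unfold pa; norm_num

lemma sqrt3_lt : Real.sqrt 3 < 2 := by
  nlinarith [Real.sq_sqrt (show (0:ℝ) ≤ 3 by norm_num), Real.sqrt_nonneg 3]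

lemma Tcont_aux {a₀ : ℝ} (h : 0 < 1+a₀-pa a₀) : ContinuousAt Tfun a₀ := by
  have hpc : Continuous pa := Real.continuous_sqrt.comp (by continuity)
  apply ContinuousAt.add
  · apply ContinuousAt.div_const
    apply ContinuousAt.neg
    apply ContinuousAt.pow
    have hin : Continuous (fun a : ℝ => 1+a-pa a) :=
      (continuous_const.add continuous_id).sub hpc
    exact (Real.continuousAt_log h.ne').comp (x := a₀) (f := fun a : ℝ => 1+a-pa a)
      hin.continuousAt
  · apply ContinuousAt.div_const
    apply ContinuousAt.sub
    · exact (Real.continuous_arccos.continuousAt.comp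
        (continuous_const.sub continuous_id).continuousAt).const_mul π
    · exact (ContinuousAt.pow ((Real.continuous_arccos.continuousAt.comp
        (continuous_const.sub continuous_id).continuousAt)) 2).div_const 2

lemma T_zero_lim : Tendsto Tfun (𝓝[>] (0:ℝ)) (𝓝 0) := by
  have hc := Tcont_aux (a₀ := 0) (by rw [pa_zero]; norm_num)
  have hval : Tfun 0 = 0 := by
    unfold Tfun
    rw [pa_zero]
    norm_num [Real.arccos_one]
  have := hc.tendsto
  rw [hval] at this
  exact this.mono_left nhdsWithin_le_nhds

lemma T_one_lim : Tendsto Tfun (𝓝[<] (1:ℝ))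
    (𝓝 (3*π^2/16 - (Real.log (2 - Real.sqrt 3))^2/4)) := by
  have hc := Tcont_aux (a₀ := 1) (by rw [pa_one]; nlinarith [sqrt3_lt])
  have hval : Tfun 1 = 3*π^2/16 - (Real.log (2 - Real.sqrt 3))^2/4 := by
    unfold Tfun
    rw [pa_one, show (1:ℝ)+1-Real.sqrt 3 = 2 - Real.sqrt 3 from by ring,
      show (1:ℝ)-1 = 0 from by ring, Real.arccos_zero]
    ring
  have := hc.tendsto
  rw [hval] at this
  exact this.mono_left nhdsWithin_le_nhds

lemma Vval : Cfun 1 = 3*π^2/16 - (Real.log (2 - Real.sqrt 3))^2/4 := by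
  have hC : ∫ a in (0:ℝ)..1, qfun a = Cfun 1 - 0 := by
    apply intervalIntegral.integral_eq_sub_of_hasDerivAt_of_tendsto (by norm_num)
      (fun a ha => C_hasDeriv ha.1 ha.2) q_int
    · have h0 := Cfun_cont 0
      rw [Cfun_zero] at h0
      exact h0.mono_left nhdsWithin_le_nhds
    · exact (Cfun_cont 1).mono_left nhdsWithin_le_nhds
  have hT : ∫ a in (0:ℝ)..1, qfun a
      = (3*π^2/16 - (Real.log (2 - Real.sqrt 3))^2/4) - 0 := by
    apply intervalIntegral.integral_eq_sub_of_hasDerivAt_of_tendsto (by norm_num)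
      (fun a ha => Tderiv ha.1 ha.2) q_int T_zero_lim T_one_lim
  rw [hC] at hT
  linarith

end Part4

lemma part2 : ∫ x in Ioo (0:ℝ) (π/2), arctan (sin x ^ 3) = Cfun 1 - Afun (π/4) := by
  have hint1 : IntegrableOn (fun x => arctan ((1:ℝ) * (sin x/cos x^2))) (Ioo (0:ℝ) (π/2)) :=
    arctan_int _ (g_meas.const_mul 1)
  have hint2 : IntegrableOn (fun x => arctan (tan (π/4) * sin x)) (Ioo (0:ℝ) (π/2)) :=
    arctan_int _ (Real.measurable_sin.const_mul _)
  unfold Cfun Afun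
  rw [← MeasureTheory.integral_sub hint1 hint2]
  apply setIntegral_congr_fun measurableSet_Ioo
  intro x hx
  have hs0 : 0 < sin x := Real.sin_pos_of_pos_of_lt_pi hx.1 (by nlinarith [hx.2, pi_pos])
  have hc0 : 0 < cos x := Real.cos_pos_of_mem_Ioo ⟨by linarith [hx.1, pi_pos], hx.2⟩
  have hs1 : sin x < 1 := sin_lt_one' (by linarith [hx.1, pi_pos]) hx.2
  have hs2 : sin x^2 < 1 := by nlinarith
  have hadd := Real.arctan_add (x := sin x) (y := sin x^3)
    (by nlinarith [sq_nonneg (sin x^2)] : sin x * sin x^3 < 1)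
  have hpy := Real.sin_sq_add_cos_sq x
  have hne : (1:ℝ) - sin x*sin x^3 ≠ 0 := by nlinarith
  have he : (sin x + sin x^3)/(1 - sin x*sin x^3) = sin x/cos x^2 := by
    rw [div_eq_div_iff hne (by positivity)]
    linear_combination (sin x + sin x^3) * hpy
  dsimp only
  rw [Real.tan_pi_div_four, one_mul, one_mul, ← he, ← hadd]
  ring

end SandAux

theorem fiveF4_arctan_sin_cube :
    ∑' n : ℕ,
        poch (1/2) n * poch (2/3) n * poch 1 n * poch 1 n * poch (4/3) n
          / (poch (5/6) n * poch (7/6) n * poch (3/2) n * poch (3/2) n * (Nat.factorial n))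
          * (-1 : ℝ) ^ n =
      3 * Real.pi^2 / 32 + (3/4) * (Real.log (Real.sqrt 2 + 1))^2
        - (3/8) * (Real.log (2 - Real.sqrt 3))^2 := by
  rw [SandAux.partA, SandAux.part2, SandAux.Vval, SandAux.J1val]
  ring
end
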